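/- arXiv:1802.00459 — 3 statements merged into one kernel-verified Lean document; each statement's English description precedes it below -/
import Mathlib

section
/- For each i ∈ {0,…,L}, let (h′_i(p))_{p∈Q} be λ-wise independent {0,1}-valued random variables with P[h′_i(p) = 1] = min(4·10⁴·ε⁻²·γ⁻¹·λ/T_i(o), 1) for every p ∈ Q. Then with probability at least 1 − δ/10, simultaneously for every i ∈ {0,…,L} with T_i(o) ≥ 4·10⁴·ε⁻²·γ⁻¹·λ: either |Σ_{p∈Q_i} h′_i(p) − |Q_i|·4·10⁴·ε⁻²·γ⁻¹·λ/T_i(o)| ≤ 4·10³·ε⁻¹·λ, or (1 − 0.01·ε)·|Q_i|·4·10⁴·ε⁻²·γ⁻¹·λ/T_i(o) ≤ Σ_{p∈Q_i} h′_i(p) ≤ (1 + 0.01·ε)·|Q_i|·4·10⁴·ε⁻²·γ⁻¹·λ/T_i(o). -/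
open scoped BigOperators Classical
open MeasureTheory

noncomputable section

/-- Points of `ℝ^d` with the Euclidean distance. -/
abbrev Pt (d : ℕ) := EuclideanSpace ℝ (Fin d)

/-- Side length `g_i = Δ / 2^i` of the grid `G_i`. -/
def gside (Δ : ℕ) (i : ℤ) : ℝ := (Δ : ℝ) / (2 : ℝ) ^ i

/-- The half-open axis-parallel cube of side length `g` with corner `v + n·g`
(a cell of the shifted grid). -/
def cell (d : ℕ) (v : Pt d) (g : ℝ) (n : Fin d → ℤ) : Set (Pt d) :=
  {x | ∀ α : Fin d, v α + (n α : ℝ) * g ≤ x α ∧ x α < v α + ((n α : ℝ) + 1) * g}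

/-- Index of the cell of side length `g` containing the point `p`. -/
def idx (d : ℕ) (v : Pt d) (g : ℝ) (p : Pt d) : Fin d → ℤ :=
  fun α => ⌊(p α - v α) / g⌋

/-- `|C ∩ Q|`, the number of points of `Q` in the given cell. -/
def cellCount (d : ℕ) (Q : Finset (Pt d)) (v : Pt d) (g : ℝ) (n : Fin d → ℤ) : ℕ :=
  (Q.filter (fun p => p ∈ cell d v g n)).card

/-- The threshold `T_i(o) = (d/g_i)² · o / (100k)`. -/
def Tthr (d k Δ : ℕ) (o : ℝ) (i : ℤ) : ℝ :=
  ((d : ℝ) / gside Δ i) ^ 2 * o / (100 * (k : ℝ))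

/-- A cell is heavy iff it is the cell of `G_{-1}` containing `Q`, or it is a nonempty
cell of some `G_i`, `0 ≤ i ≤ L-1`, whose estimate `ẑ` is at least `T_i(o)`. -/
def Heavy (d k L Δ : ℕ) (Q : Finset (Pt d)) (v : Pt d) (o : ℝ)
    (zhat : ℤ → (Fin d → ℤ) → ℝ) (i : ℤ) (n : Fin d → ℤ) : Prop :=
  (i = -1 ∧ (Q : Set (Pt d)) ⊆ cell d v (gside Δ i) n) ∨
  (0 ≤ i ∧ i ≤ (L : ℤ) - 1 ∧ 0 < cellCount d Q v (gside Δ i) n ∧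
    Tthr d k Δ o i ≤ zhat i n)

/-- A cell of `G_i` (`0 ≤ i ≤ L`) is crucial iff it is not heavy but all of its
ancestors are heavy. -/
def Crucial (d k L Δ : ℕ) (Q : Finset (Pt d)) (v : Pt d) (o : ℝ)
    (zhat : ℤ → (Fin d → ℤ) → ℝ) (i : ℤ) (n : Fin d → ℤ) : Prop :=
  0 ≤ i ∧ i ≤ (L : ℤ) ∧ ¬ Heavy d k L Δ Q v o zhat i n ∧
  ∀ j : ℤ, -1 ≤ j → j < i → ∀ m : Fin d → ℤ,
    cell d v (gside Δ i) n ⊆ cell d v (gside Δ j) m →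
      Heavy d k L Δ Q v o zhat j m

/-- `Q_i`, the set of points of `Q` lying in a crucial cell of `G_i`. -/
def Qlevel (d k L Δ : ℕ) (Q : Finset (Pt d)) (v : Pt d) (o : ℝ)
    (zhat : ℤ → (Fin d → ℤ) → ℝ) (i : ℤ) : Finset (Pt d) :=
  Q.filter (fun p => Crucial d k L Δ Q v o zhat i (idx d v (gside Δ i) p))

/-- Accuracy guarantee of the estimation function `ẑ`: for every nonempty cell of
`G_i`, `0 ≤ i ≤ L-1`, either `|ẑ(C) - |C∩Q|| ≤ 0.1·T_i(o)` or
`0.99·|C∩Q| ≤ ẑ(C) ≤ 1.01·|C∩Q|`. -/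
def ZhatAccurate (d k L Δ : ℕ) (Q : Finset (Pt d)) (v : Pt d) (o : ℝ)
    (zhat : ℤ → (Fin d → ℤ) → ℝ) : Prop :=
  ∀ i : ℤ, 0 ≤ i → i ≤ (L : ℤ) - 1 → ∀ n : Fin d → ℤ,
    0 < cellCount d Q v (gside Δ i) n →
      (|zhat i n - (cellCount d Q v (gside Δ i) n : ℝ)| ≤ 0.1 * Tthr d k Δ o i ∨
        (0.99 * (cellCount d Q v (gside Δ i) n : ℝ) ≤ zhat i n ∧
          zhat i n ≤ 1.01 * (cellCount d Q v (gside Δ i) n : ℝ)))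

/-- `γ = ε / (1600·L·d³)`. -/
def gammaPar (d L : ℕ) (ε : ℝ) : ℝ := ε / (1600 * (L : ℝ) * (d : ℝ) ^ 3)

/-- Accuracy guarantee of the estimates `q̂_i` of `|Q_i|`. -/
def QhatAccurate (d k L Δ : ℕ) (Q : Finset (Pt d)) (v : Pt d) (o ε : ℝ)
    (zhat : ℤ → (Fin d → ℤ) → ℝ) (qhat : ℕ → ℝ) : Prop :=
  ∀ i : ℕ, i ≤ L →
    0 ≤ qhat i ∧
    (|qhat i - ((Qlevel d k L Δ Q v o zhat i).card : ℝ)| ≤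
        0.1 * ε * gammaPar d L ε * Tthr d k Δ o i ∨
      ((1 - 0.01 * ε) * ((Qlevel d k L Δ Q v o zhat i).card : ℝ) ≤ qhat i ∧
        qhat i ≤ (1 + 0.01 * ε) * ((Qlevel d k L Δ Q v o zhat i).card : ℝ)))

/-- The set of levels `I = {i ∈ {0,…,L} : q̂_i ≥ γ·T_i(o)}`. -/
def levelI (d k L Δ : ℕ) (o ε : ℝ) (qhat : ℕ → ℝ) : Finset ℕ :=
  (Finset.range (L + 1)).filter
    (fun i => gammaPar d L ε * Tthr d k Δ o i ≤ qhat i)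

/-- `Q^I = ∪_{i ∈ I} Q_i`. -/
def QI (d k L Δ : ℕ) (Q : Finset (Pt d)) (v : Pt d) (o ε : ℝ)
    (zhat : ℤ → (Fin d → ℤ) → ℝ) (qhat : ℕ → ℝ) : Finset (Pt d) :=
  (levelI d k L Δ o ε qhat).biUnion (fun i => Qlevel d k L Δ Q v o zhat i)

/-- `dist(q, Z) = min_{z ∈ Z} dist(q, z)`. -/
def nearDist (d : ℕ) (q : Pt d) (Z : Finset (Pt d)) : ℝ :=
  sInf ((dist q) '' (Z : Set (Pt d)))

/-- `cost(P, Z) = Σ_{q ∈ P} dist(q, Z)²`. -/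
def cost (d : ℕ) (P Z : Finset (Pt d)) : ℝ :=
  ∑ q ∈ P, nearDist d q Z ^ 2

/-- `OPT`, the optimal `k`-means cost of `Q`. -/
def OPTcost (d k : ℕ) (Q : Finset (Pt d)) : ℝ :=
  sInf {c : ℝ | ∃ Z : Finset (Pt d), Z.card = k ∧ c = cost d Q Z}

/-- Distance between two sets: `inf {dist x z : x ∈ C, z ∈ Z}`. -/
def setDist (d : ℕ) (C Z : Set (Pt d)) : ℝ := sInf (Set.image2 dist C Z)

/-- A cell `C ∈ G_i` is a center cell w.r.t. `Z*` if `dist(C, Z*) ≤ g_i/(2d)`. -/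
def IsCenterCell (d Δ : ℕ) (v : Pt d) (Zstar : Finset (Pt d)) (i : ℤ)
    (n : Fin d → ℤ) : Prop :=
  setDist d (cell d v (gside Δ i) n) (Zstar : Set (Pt d)) ≤ gside Δ i / (2 * (d : ℝ))

/-- The box `[0, Δ]^d` from which the random shift is drawn. -/
def shiftBox (d Δ : ℕ) : Set (Pt d) := {v | ∀ α : Fin d, v α ∈ Set.Icc (0 : ℝ) (Δ : ℝ)}

/-! ### Auxiliary machinery: moments of λ-wise independent Bernoulli sums -/

section ConcentrationAux

open ProbabilityTheory Finset

variable {Ω : Type*} [MeasurableSpace Ω]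

lemma integrable_of_abs_le {P : Measure Ω} [IsFiniteMeasure P] {f : Ω → ℝ} {C : ℝ}
    (hf : Measurable f) (hC : ∀ ω, |f ω| ≤ C) : Integrable f P :=
  (MeasureTheory.integrable_const C).mono' hf.aestronglyMeasurable
    (Filter.Eventually.of_forall fun ω => by simpa [Real.norm_eq_abs] using hC ω)

lemma integral_prod_of_indep {ι : Type*} {P : Measure Ω} [IsProbabilityMeasure P]
    (g : ι → Ω → ℝ) (hmeas : ∀ j, Measurable (g j)) (hbdd : ∀ j ω, |g j ω| ≤ 1)
    (hind : iIndepFun g P) (t : Finset ι) :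
    ∫ ω, ∏ j ∈ t, g j ω ∂P = ∏ j ∈ t, ∫ ω, g j ω ∂P := by
  classical
  induction t using Finset.induction_on with
  | empty => simp
  | @insert a t ha ih =>
    have hint : ∀ u : Finset ι, Integrable (fun ω => ∏ j ∈ u, g j ω) P := fun u =>
      integrable_of_abs_le (Finset.measurable_prod u fun j _ => hmeas j)
        (fun ω => by
          rw [Finset.abs_prod]
          exact Finset.prod_le_one (fun j _ => abs_nonneg _) (fun j _ => hbdd j ω))
    have hIF : IndepFun (fun ω => ∏ j ∈ t, g j ω) (g a) P := by
      have h0 : IndepFun (∏ j ∈ t, g j) (g a) P :=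
        hind.indepFun_finsetProd_of_notMem hmeas ha
      have : (∏ j ∈ t, g j) = fun ω => ∏ j ∈ t, g j ω := by
        funext ω; rw [Finset.prod_apply]
      rwa [this] at h0
    have h2 : ∫ ω, g a ω * ∏ j ∈ t, g j ω ∂P
        = (∫ ω, g a ω ∂P) * ∫ ω, ∏ j ∈ t, g j ω ∂P := by
      have := hIF.symm.integral_mul_eq_mul_integral
        (integrable_of_abs_le (hmeas a) (fun ω => hbdd a ω)).aestronglyMeasurable
        (hint t).aestronglyMeasurable
      simpa [Pi.mul_apply] using this
    calc ∫ ω, ∏ j ∈ insert a t, g j ω ∂P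
        = ∫ ω, g a ω * ∏ j ∈ t, g j ω ∂P := by
          congr 1; funext ω; exact Finset.prod_insert ha
      _ = (∫ ω, g a ω ∂P) * ∫ ω, ∏ j ∈ t, g j ω ∂P := h2
      _ = ∏ j ∈ insert a t, ∫ ω, g j ω ∂P := by rw [Finset.prod_insert ha, ih]

variable {P : Measure Ω} [IsProbabilityMeasure P]

lemma bernoulli_integral {h : Ω → ℝ} {p : ℝ} (hp0 : 0 ≤ p)
    (hmeas : Measurable h) (h01 : ∀ ω, h ω = 0 ∨ h ω = 1)
    (hPr : P {ω | h ω = 1} = ENNReal.ofReal p) :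
    ∫ ω, h ω ∂P = p := by
  have hs : MeasurableSet {ω | h ω = 1} := hmeas (measurableSet_singleton 1)
  have hind : h = Set.indicator {ω | h ω = 1} (fun _ => (1 : ℝ)) := by
    funext ω
    rcases h01 ω with h0 | h1
    · simp [Set.indicator_apply, Set.mem_setOf_eq, h0]
    · simp [Set.indicator_apply, Set.mem_setOf_eq, h1]
  rw [hind, MeasureTheory.integral_indicator_const (1 : ℝ) hs, measureReal_def, hPr,
    ENNReal.toReal_ofReal hp0, smul_eq_mul, mul_one]

lemma bernoulli_centered_moments {h : Ω → ℝ} {p : ℝ} (hp0 : 0 ≤ p) (hp1 : p ≤ 1)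
    (hmeas : Measurable h) (h01 : ∀ ω, h ω = 0 ∨ h ω = 1)
    (hPr : P {ω | h ω = 1} = ENNReal.ofReal p) :
    (∫ ω, (h ω - p) ∂P = 0) ∧ ∀ k : ℕ, 2 ≤ k → |∫ ω, (h ω - p) ^ k ∂P| ≤ p := by
  have habs1 : ∀ ω, |h ω| ≤ 1 := by
    intro ω; rcases h01 ω with h0 | h1
    · rw [h0]; norm_num
    · rw [h1]; norm_num
  have habs : ∀ ω, |h ω - p| ≤ 1 := by
    intro ω; rcases h01 ω with h0 | h1
    · rw [h0, abs_le]; constructor <;> linarith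
    · rw [h1, abs_le]; constructor <;> linarith
  have hinth : Integrable h P := integrable_of_abs_le hmeas habs1
  have hEh : ∫ ω, h ω ∂P = p := bernoulli_integral hp0 hmeas h01 hPr
  have hE0 : ∫ ω, (h ω - p) ∂P = 0 := by
    rw [MeasureTheory.integral_sub hinth (MeasureTheory.integrable_const p), hEh]
    simp
  have hE2 : ∫ ω, (h ω - p) ^ 2 ∂P = p - p ^ 2 := by
    have hpt : (fun ω => (h ω - p) ^ 2) = fun ω => (1 - 2 * p) * h ω + p ^ 2 := by
      funext ω; rcases h01 ω with h0 | h1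
      · rw [h0]; ring
      · rw [h1]; ring
    rw [hpt, MeasureTheory.integral_add (hinth.const_mul _)
      (MeasureTheory.integrable_const _), MeasureTheory.integral_const_mul, hEh]
    simp [measure_univ]
    ring
  refine ⟨hE0, fun kk hkk => ?_⟩
  have hYk_int : Integrable (fun ω => (h ω - p) ^ kk) P :=
    integrable_of_abs_le ((hmeas.sub measurable_const).pow_const kk)
      (fun ω => by rw [abs_pow]; exact pow_le_one₀ (abs_nonneg _) (habs ω))
  have habs_int : Integrable (fun ω => |(h ω - p) ^ kk|) P :=
    hYk_int.abs
  have step1 : |∫ ω, (h ω - p) ^ kk ∂P| ≤ ∫ ω, |(h ω - p) ^ kk| ∂P := by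
    simpa [Real.norm_eq_abs] using
      MeasureTheory.norm_integral_le_integral_norm (μ := P) (fun ω => (h ω - p) ^ kk)
  have step2 : ∫ ω, |(h ω - p) ^ kk| ∂P ≤ ∫ ω, (h ω - p) ^ 2 ∂P := by
    refine MeasureTheory.integral_mono habs_int
      (integrable_of_abs_le ((hmeas.sub measurable_const).pow_const 2)
        (fun ω => by rw [abs_pow]; exact pow_le_one₀ (abs_nonneg _) (habs ω))) ?_
    intro ω
    have : |(h ω - p)| ^ kk ≤ |(h ω - p)| ^ 2 :=
      pow_le_pow_of_le_one (abs_nonneg _) (habs ω) hkk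
    calc |(h ω - p) ^ kk| = |h ω - p| ^ kk := by rw [abs_pow]
      _ ≤ |h ω - p| ^ 2 := this
      _ = (h ω - p) ^ 2 := sq_abs _
  have : |∫ ω, (h ω - p) ^ kk ∂P| ≤ p - p ^ 2 := by
    rw [← hE2]; exact le_trans step1 step2
  nlinarith [sq_nonneg p]

end ConcentrationAux

/-! ### First-occurrence encoding -/

section FirstOcc

open Finset

variable {α : Type*}

/-- The first position with the same value as position `j`. -/
noncomputable def cfirst {n : ℕ} (f : Fin n → α) (j : Fin n) : Fin n :=
  (Finset.univ.filter (fun j' => f j' = f j)).min'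
    ⟨j, Finset.mem_filter.2 ⟨Finset.mem_univ j, rfl⟩⟩

private lemma min'_congr {β : Type*} [LinearOrder β] {s t : Finset β} (h : s = t)
    (hs : s.Nonempty) (ht : t.Nonempty) : s.min' hs = t.min' ht := by subst h; rfl

lemma cfirst_spec {n : ℕ} (f : Fin n → α) (j : Fin n) : f (cfirst f j) = f j := by
  have := Finset.min'_mem (Finset.univ.filter (fun j' => f j' = f j))
    ⟨j, Finset.mem_filter.2 ⟨Finset.mem_univ j, rfl⟩⟩
  exact (Finset.mem_filter.1 this).2

lemma cfirst_congr {n : ℕ} (f : Fin n → α) {j j' : Fin n} (h : f j = f j') :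
    cfirst f j = cfirst f j' :=
  min'_congr (by ext j''; simp [h]) _ _

lemma cfirst_idem {n : ℕ} (f : Fin n → α) (j : Fin n) :
    cfirst f (cfirst f j) = cfirst f j :=
  cfirst_congr f (cfirst_spec f j)

/-- The set of first-occurrence positions. -/
noncomputable def focc {n : ℕ} (f : Fin n → α) : Finset (Fin n) :=
  Finset.univ.filter (fun j => cfirst f j = j)

lemma cfirst_mem_focc {n : ℕ} (f : Fin n → α) (j : Fin n) : cfirst f j ∈ focc f :=
  Finset.mem_filter.2 ⟨Finset.mem_univ _, cfirst_idem f j⟩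

lemma focc_card {n : ℕ} (f : Fin n → α) :
    (focc f).card = (Finset.univ.image f).card := by
  classical
  refine Finset.card_bij (fun j _ => f j) ?_ ?_ ?_
  · intro j hj; exact Finset.mem_image_of_mem f (Finset.mem_univ j)
  · intro j₁ h₁ j₂ h₂ hf
    have e1 : cfirst f j₁ = j₁ := (Finset.mem_filter.1 h₁).2
    have e2 : cfirst f j₂ = j₂ := (Finset.mem_filter.1 h₂).2
    rw [← e1, ← e2]; exact cfirst_congr f hf
  · intro b hb
    obtain ⟨j, _, rfl⟩ := Finset.mem_image.1 hb
    exact ⟨cfirst f j, cfirst_mem_focc f j, cfirst_spec f j⟩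

private lemma prod_ite_card {n : ℕ} (S : Finset (Fin n)) (a b : ℕ) :
    (∏ j : Fin n, (if j ∈ S then a else b)) = a ^ S.card * b ^ (n - S.card) := by
  classical
  rw [← Finset.prod_filter_mul_prod_filter_not Finset.univ (· ∈ S)]
  have h1 : Finset.univ.filter (· ∈ S) = S := Finset.filter_univ_mem S
  have h2 : Finset.univ.filter (fun j => ¬ j ∈ S) = Finset.univ \ S := by
    rw [Finset.filter_not, h1]
  rw [h2]
  have e1 : (∏ j ∈ Finset.univ.filter (· ∈ S), (if j ∈ S then a else b)) = a ^ S.card := by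
    rw [h1]
    rw [Finset.prod_congr rfl (fun j hj => if_pos hj)]
    exact Finset.prod_const a
  have e2 : (∏ j ∈ Finset.univ \ S, (if j ∈ S then a else b)) = b ^ (n - S.card) := by
    rw [Finset.prod_congr rfl (fun j hj => if_neg (Finset.mem_sdiff.1 hj).2)]
    rw [Finset.prod_const b, Finset.card_sdiff_of_subset (Finset.subset_univ S)]
    congr 1
    rw [Finset.card_univ, Fintype.card_fin]
  rw [e1, e2]

end FirstOcc

section CountBound

open Finset


private lemma perS_real (x c : ℝ) (hx : 0 ≤ x) (hc : 0 ≤ c) (m r : ℕ) (hr : r ≤ m) :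
    x ^ r * c ^ (2 * m - r) ≤ c ^ m * (max x c) ^ m := by
  have hmax0 : 0 ≤ max x c := le_trans hc (le_max_right _ _)
  have h1 : x ^ r ≤ (max x c) ^ r := pow_le_pow_left₀ hx (le_max_left _ _) _
  have h2 : c ^ (m - r) ≤ (max x c) ^ (m - r) := pow_le_pow_left₀ hc (le_max_right _ _) _
  have hsplit : c ^ (2 * m - r) = c ^ (m - r) * c ^ m := by
    rw [← pow_add]; congr 1; omega
  calc x ^ r * c ^ (2 * m - r) = x ^ r * c ^ (m - r) * c ^ m := by rw [hsplit]; ring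
    _ ≤ (max x c) ^ r * (max x c) ^ (m - r) * c ^ m := by
        refine mul_le_mul_of_nonneg_right ?_ (pow_nonneg hc m)
        exact mul_le_mul h1 h2 (pow_nonneg hc _) (pow_nonneg hmax0 _)
    _ = c ^ m * (max x c) ^ m := by
        rw [← pow_add, show r + (m - r) = m by omega]; ring

set_option maxHeartbeats 2000000 in
/-- Counting bound: the weighted number of "no-singleton" functions. -/
lemma count_bound {α : Type*} (A : Finset α) (a₀ : α) (ha₀ : a₀ ∈ A)
    (p : ℝ) (hp0 : 0 ≤ p) (m : ℕ) :
    ∑ f ∈ (Fintype.piFinset (fun _ : Fin (2 * m) => A)).filter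
        (fun f => ∀ j : Fin (2 * m),
          2 ≤ (Finset.univ.filter (fun j' => f j' = f j)).card),
      p ^ ((Finset.univ.image f).card)
    ≤ 4 ^ m * ((2 * m : ℕ) : ℝ) ^ m * (max ((A.card : ℝ) * p) ((2 * m : ℕ) : ℝ)) ^ m := by
  classical
  set n := 2 * m with hn
  set NS := (Fintype.piFinset (fun _ : Fin n => A)).filter
      (fun f => ∀ j : Fin n, 2 ≤ (Finset.univ.filter (fun j' => f j' = f j)).card) with hNS
  set SS : Finset (Finset (Fin n)) := Finset.univ.filter (fun S => S.card ≤ m) with hSS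
  set T : Finset (Σ _ : Finset (Fin n), (Fin n → α) × (Fin n → Fin n)) :=
    SS.sigma (fun S =>
      (Fintype.piFinset (fun j => if j ∈ S then A else {a₀})) ×ˢ
      (Fintype.piFinset (fun j : Fin n => if j ∈ S then ({j} : Finset (Fin n))
        else Finset.univ))) with hT
  set φ : (Fin n → α) → (Σ _ : Finset (Fin n), (Fin n → α) × (Fin n → Fin n)) :=
    fun f => ⟨focc f, (fun j => if j ∈ focc f then f j else a₀, fun j => cfirst f j)⟩ with hφ
  -- no-singleton functions have at most m distinct values
  have h2r : ∀ f ∈ NS, (focc f).card ≤ m := by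
    intro f hf
    have hcond := (Finset.mem_filter.1 hf).2
    have hpart : (Finset.univ : Finset (Fin n)).card
        = ∑ b ∈ Finset.univ.image f, (Finset.univ.filter (fun j => f j = b)).card :=
      Finset.card_eq_sum_card_fiberwise
        (fun x _ => Finset.mem_image_of_mem f (Finset.mem_univ x))
    have hsum : 2 * (Finset.univ.image f).card
        ≤ ∑ b ∈ Finset.univ.image f, (Finset.univ.filter (fun j => f j = b)).card := by
      calc 2 * (Finset.univ.image f).card
          = ∑ _b ∈ Finset.univ.image f, 2 := by
            rw [Finset.sum_const, smul_eq_mul, mul_comm]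
        _ ≤ _ := by
            refine Finset.sum_le_sum ?_
            intro b hb
            obtain ⟨j, _, rfl⟩ := Finset.mem_image.1 hb
            exact hcond j
    have hun : (Finset.univ : Finset (Fin n)).card = n := by
      rw [Finset.card_univ, Fintype.card_fin]
    rw [focc_card]
    omega
  -- φ maps NS into T
  have hmemT : ∀ f ∈ NS, φ f ∈ T := by
    intro f hf
    have hfA : ∀ j, f j ∈ A :=
      fun j => Fintype.mem_piFinset.1 (Finset.mem_filter.1 hf).1 j
    refine Finset.mem_sigma.2 ⟨Finset.mem_filter.2 ⟨Finset.mem_univ _, h2r f hf⟩, ?_⟩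
    refine Finset.mem_product.2 ⟨?_, ?_⟩
    · refine Fintype.mem_piFinset.2 ?_
      intro j
      by_cases hj : j ∈ focc f
      · simp only [hφ, hj, if_pos, if_true]
        exact hfA j
      · simp only [hφ, hj, if_neg, if_false]
        exact Finset.mem_singleton_self a₀
    · refine Fintype.mem_piFinset.2 ?_
      intro j
      by_cases hj : j ∈ focc f
      · simp only [hφ, hj, if_true]
        exact Finset.mem_singleton.2 (Finset.mem_filter.1 hj).2
      · simp only [hφ, hj, if_false]
        exact Finset.mem_univ _
  -- φ is injective
  have hinj : ∀ f₁ ∈ NS, ∀ f₂ ∈ NS, φ f₁ = φ f₂ → f₁ = f₂ := by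
    intro f₁ _ f₂ _ he
    have h1 : focc f₁ = focc f₂ := congrArg Sigma.fst he
    have h2 : (φ f₁).2 = (φ f₂).2 := by
      rw [Sigma.ext_iff] at he
      exact eq_of_heq he.2
    have hv : (fun j => if j ∈ focc f₁ then f₁ j else a₀)
        = (fun j => if j ∈ focc f₂ then f₂ j else a₀) := congrArg Prod.fst h2
    have hc : (fun j => cfirst f₁ j) = (fun j => cfirst f₂ j) := congrArg Prod.snd h2
    funext j
    have e1 : (if cfirst f₁ j ∈ focc f₁ then f₁ (cfirst f₁ j) else a₀) = f₁ j := by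
      rw [if_pos (cfirst_mem_focc f₁ j)]; exact cfirst_spec f₁ j
    have e2 : (if cfirst f₂ j ∈ focc f₂ then f₂ (cfirst f₂ j) else a₀) = f₂ j := by
      rw [if_pos (cfirst_mem_focc f₂ j)]; exact cfirst_spec f₂ j
    have hcj : cfirst f₁ j = cfirst f₂ j := congrFun hc j
    calc f₁ j = (if cfirst f₁ j ∈ focc f₁ then f₁ (cfirst f₁ j) else a₀) := e1.symm
      _ = (if cfirst f₂ j ∈ focc f₂ then f₂ (cfirst f₂ j) else a₀) := by
          rw [hcj] at *
          exact (congrFun hv (cfirst f₂ j)).trans rfl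
      _ = f₂ j := e2
  -- main chain
  have hstep : ∑ f ∈ NS, p ^ ((Finset.univ.image f).card)
      ≤ ∑ x ∈ T, p ^ (x.1.card) := by
    have e0 : ∑ f ∈ NS, p ^ ((Finset.univ.image f).card)
        = ∑ f ∈ NS, p ^ ((φ f).1.card) := by
      refine Finset.sum_congr rfl ?_
      intro f _
      have : (φ f).1 = focc f := rfl
      rw [this, focc_card]
    rw [e0]
    have e1 : ∑ f ∈ NS, p ^ ((φ f).1.card)
        = ∑ x ∈ NS.image φ, p ^ (x.1.card) := by
      rw [Finset.sum_image]
      intro f hf g hg hfg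
      exact hinj f hf g hg hfg
    rw [e1]
    refine Finset.sum_le_sum_of_subset_of_nonneg ?_ ?_
    · intro x hx
      obtain ⟨f, hf, rfl⟩ := Finset.mem_image.1 hx
      exact hmemT f hf
    · intro x _ _; exact pow_nonneg hp0 _
  clear hmemT hinj h2r
  clear_value φ
  clear hφ φ
  have hTsum : ∑ x ∈ T, p ^ (x.1.card)
      ≤ 4 ^ m * ((n : ℕ) : ℝ) ^ m * (max ((A.card : ℝ) * p) ((n : ℕ) : ℝ)) ^ m := by
    have hmax0 : (0 : ℝ) ≤ max ((A.card : ℝ) * p) ((n : ℕ) : ℝ) :=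
      le_trans (Nat.cast_nonneg n) (le_max_right _ _)
    have hB0 : (0 : ℝ) ≤ ((n : ℕ) : ℝ) ^ m * (max ((A.card : ℝ) * p) ((n : ℕ) : ℝ)) ^ m :=
      mul_nonneg (pow_nonneg (Nat.cast_nonneg _) _) (pow_nonneg hmax0 _)
    rw [hT, Finset.sum_sigma]
    have hperS : ∀ S ∈ SS,
        (∑ y ∈ (Fintype.piFinset (fun j => if j ∈ S then A else {a₀})) ×ˢ
          (Fintype.piFinset (fun j : Fin n => if j ∈ S then ({j} : Finset (Fin n))
            else Finset.univ)), p ^ S.card)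
        ≤ ((n : ℕ) : ℝ) ^ m * (max ((A.card : ℝ) * p) ((n : ℕ) : ℝ)) ^ m := by
      intro S hS
      have hr : S.card ≤ m := (Finset.mem_filter.1 hS).2
      rw [Finset.sum_const, nsmul_eq_mul, Finset.card_product]
      have hV : (Fintype.piFinset (fun j => if j ∈ S then A else {a₀})).card
          = A.card ^ S.card := by
        rw [Fintype.card_piFinset]
        have hcards : ∀ j : Fin n, (if j ∈ S then A else {a₀}).card
            = (if j ∈ S then A.card else 1) := by
          intro j; split <;> simp
        rw [Finset.prod_congr rfl (fun j _ => hcards j), prod_ite_card]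
        rw [one_pow, mul_one]
      have hC : (Fintype.piFinset (fun j : Fin n => if j ∈ S then ({j} : Finset (Fin n))
          else Finset.univ)).card = n ^ (n - S.card) := by
        rw [Fintype.card_piFinset]
        have hcards : ∀ j : Fin n,
            (if j ∈ S then ({j} : Finset (Fin n)) else Finset.univ).card
            = (if j ∈ S then 1 else n) := by
          intro j; split
          · simp
          · rw [Finset.card_univ, Fintype.card_fin]
        rw [Finset.prod_congr rfl (fun j _ => hcards j), prod_ite_card, one_pow, one_mul]
      have hcards2 : (((Fintype.piFinset (fun j => if j ∈ S then A else {a₀})).card *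
          (Fintype.piFinset (fun j : Fin n => if j ∈ S then ({j} : Finset (Fin n))
            else Finset.univ)).card : ℕ) : ℝ)
          = (A.card : ℝ) ^ S.card * ((n : ℕ) : ℝ) ^ (n - S.card) := by
        rw [hV, hC]; push_cast; ring
      rw [hcards2]
      have hexp : n - S.card = 2 * m - S.card := by omega
      have hre : (A.card : ℝ) ^ S.card * ((n : ℕ) : ℝ) ^ (n - S.card) * p ^ S.card
          = ((A.card : ℝ) * p) ^ S.card * ((n : ℕ) : ℝ) ^ (2 * m - S.card) := by
        rw [mul_pow, hexp]; ring
      rw [hre]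
      exact perS_real ((A.card : ℝ) * p) ((n : ℕ) : ℝ) (by positivity)
        (Nat.cast_nonneg _) m S.card hr
    calc (∑ S ∈ SS, ∑ y ∈ _, p ^ S.card)
        ≤ SS.card • (((n : ℕ) : ℝ) ^ m * (max ((A.card : ℝ) * p) ((n : ℕ) : ℝ)) ^ m) :=
          Finset.sum_le_card_nsmul SS _ _ hperS
      _ ≤ (2 ^ n : ℕ) • (((n : ℕ) : ℝ) ^ m * (max ((A.card : ℝ) * p) ((n : ℕ) : ℝ)) ^ m) := by
          refine nsmul_le_nsmul_left hB0 ?_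
          calc SS.card ≤ (Finset.univ : Finset (Finset (Fin n))).card :=
                Finset.card_filter_le _ _
            _ = 2 ^ n := by rw [Finset.card_univ, Fintype.card_finset, Fintype.card_fin]
      _ = 4 ^ m * (((n : ℕ) : ℝ) ^ m * (max ((A.card : ℝ) * p) ((n : ℕ) : ℝ)) ^ m) := by
          rw [nsmul_eq_mul]
          congr 1
          rw [hn]
          push_cast
          rw [pow_mul]
          norm_num
      _ = 4 ^ m * ((n : ℕ) : ℝ) ^ m * (max ((A.card : ℝ) * p) ((n : ℕ) : ℝ)) ^ m := by ring
  exact le_trans hstep hTsum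

end CountBound

section MomentTail

open ProbabilityTheory Finset

variable {Ω : Type*} [MeasurableSpace Ω] {P : Measure Ω} [IsProbabilityMeasure P]

set_option maxHeartbeats 2000000 in
lemma moment_bound {α : Type*} (A : Finset α) (h : α → Ω → ℝ) (p : ℝ)
    (hp0 : 0 ≤ p) (hp1 : p ≤ 1)
    (hmeas : ∀ a, Measurable (h a)) (h01 : ∀ a ∈ A, ∀ ω, h a ω = 0 ∨ h a ω = 1)
    (hPr : ∀ a ∈ A, P {ω | h a ω = 1} = ENNReal.ofReal p)
    (m : ℕ)
    (hindep : ∀ s : Finset α, s ⊆ A → s.card ≤ 2 * m →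
      iIndepFun
        (fun q : ↥s => h ↑q) P) :
    ∫ ω, (∑ a ∈ A, (h a ω - p)) ^ (2 * m) ∂P
      ≤ 4 ^ m * ((2 * m : ℕ) : ℝ) ^ m * (max ((A.card : ℝ) * p) ((2 * m : ℕ) : ℝ)) ^ m := by
  classical
  rcases A.eq_empty_or_nonempty with rfl | hA
  · rcases Nat.eq_zero_or_pos m with rfl | hm
    · simp
    · have h2m : 2 * m ≠ 0 := by omega
      simp only [Finset.sum_empty, zero_pow h2m, MeasureTheory.integral_zero]
      positivity
  obtain ⟨a₀, ha₀⟩ := hA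
  set n := 2 * m with hn
  set Y : α → Ω → ℝ := fun a ω => h a ω - p with hY
  have hYmeas : ∀ a, Measurable (Y a) := fun a => (hmeas a).sub measurable_const
  have hYabs : ∀ a ∈ A, ∀ ω, |Y a ω| ≤ 1 := by
    intro a ha ω
    rcases h01 a ha ω with h0 | h1
    · simp only [hY, h0, zero_sub, abs_neg]
      rw [abs_le]; constructor <;> linarith
    · simp only [hY, h1]
      rw [abs_le]; constructor <;> linarith
  set F := Fintype.piFinset (fun _ : Fin n => A) with hF
  have hint_f : ∀ f ∈ F, Integrable (fun ω => ∏ j : Fin n, Y (f j) ω) P := by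
    intro f hf
    have hfA : ∀ j, f j ∈ A := fun j => Fintype.mem_piFinset.1 hf j
    refine integrable_of_abs_le (C := 1) (Finset.measurable_prod _ fun j _ => hYmeas (f j)) ?_
    intro ω
    rw [Finset.abs_prod]
    exact Finset.prod_le_one (fun j _ => abs_nonneg _) (fun j _ => hYabs _ (hfA j) ω)
  have hstep1 : ∫ ω, (∑ a ∈ A, Y a ω) ^ n ∂P
      = ∑ f ∈ F, ∫ ω, ∏ j : Fin n, Y (f j) ω ∂P := by
    have e : (fun ω => (∑ a ∈ A, Y a ω) ^ n)
        = fun ω => ∑ f ∈ F, ∏ j : Fin n, Y (f j) ω := by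
      funext ω; exact Finset.sum_pow' A (fun a => Y a ω) n
    rw [e]
    exact MeasureTheory.integral_finset_sum F hint_f
  -- factorization of each term
  have hterm : ∀ f ∈ F, ∫ ω, ∏ j : Fin n, Y (f j) ω ∂P
      = ∏ b ∈ Finset.univ.image f,
          ∫ ω, (Y b ω) ^ ((Finset.univ.filter (fun j => f j = b)).card) ∂P := by
    intro f hf
    have hfA : ∀ j, f j ∈ A := fun j => Fintype.mem_piFinset.1 hf j
    have hpoint : ∀ ω, ∏ j : Fin n, Y (f j) ω
        = ∏ b ∈ Finset.univ.image f,
            (Y b ω) ^ ((Finset.univ.filter (fun j => f j = b)).card) := by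
      intro ω
      exact Finset.prod_comp (fun b => Y b ω) f
    have hsub : Finset.univ.image f ⊆ A := by
      intro b hb; obtain ⟨j, _, rfl⟩ := Finset.mem_image.1 hb; exact hfA j
    have hscard : (Finset.univ.image f).card ≤ n :=
      le_trans Finset.card_image_le (by simp)
    set s := Finset.univ.image f with hs
    set kf : α → ℕ := fun b => (Finset.univ.filter (fun j => f j = b)).card with hkf
    have hindYk : iIndepFun
        (fun q : ↥s => fun ω => (h ↑q ω - p) ^ (kf ↑q)) P := by
      have := (hindep s hsub hscard).comp
        (fun q : ↥s => fun x : ℝ => (x - p) ^ (kf ↑q))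
        (fun q => (measurable_id.sub measurable_const).pow_const _)
      exact this
    have hfact := integral_prod_of_indep
      (g := fun q : ↥s => fun ω => (h ↑q ω - p) ^ (kf ↑q))
      (fun q => ((hmeas ↑q).sub measurable_const).pow_const _)
      (fun q ω => by
        rw [abs_pow]
        exact pow_le_one₀ (abs_nonneg _) (hYabs _ (hsub q.2) ω))
      hindYk Finset.univ
    calc ∫ ω, ∏ j : Fin n, Y (f j) ω ∂P
        = ∫ ω, ∏ b ∈ s, (Y b ω) ^ (kf b) ∂P := by
          congr 1; funext ω; exact hpoint ω
      _ = ∫ ω, ∏ q : ↥s, (Y ↑q ω) ^ (kf ↑q) ∂P := by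
          congr 1; funext ω
          exact (Finset.prod_coe_sort s (fun b => (Y b ω) ^ (kf b))).symm
      _ = ∏ q : ↥s, ∫ ω, (Y ↑q ω) ^ (kf ↑q) ∂P := hfact
      _ = ∏ b ∈ s, ∫ ω, (Y b ω) ^ (kf b) ∂P :=
          Finset.prod_coe_sort s (fun b => ∫ ω, (Y b ω) ^ (kf b) ∂P)
  set NS := F.filter
      (fun f => ∀ j : Fin n, 2 ≤ (Finset.univ.filter (fun j' => f j' = f j)).card) with hNS
  have hmom : ∀ a ∈ A, (∫ ω, Y a ω ∂P = 0)
      ∧ ∀ kk : ℕ, 2 ≤ kk → |∫ ω, (Y a ω) ^ kk ∂P| ≤ p :=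
    fun a ha => bernoulli_centered_moments hp0 hp1 (hmeas a) (h01 a ha) (hPr a ha)
  have hvanish : ∀ f ∈ F, f ∉ NS → ∫ ω, ∏ j : Fin n, Y (f j) ω ∂P = 0 := by
    intro f hf hnf
    have hfA : ∀ j, f j ∈ A := fun j => Fintype.mem_piFinset.1 hf j
    rw [hNS, Finset.mem_filter, not_and] at hnf
    obtain ⟨j, hj⟩ := not_forall.1 (hnf hf)
    push_neg at hj
    have h1le : 1 ≤ (Finset.univ.filter (fun j' => f j' = f j)).card :=
      Finset.card_pos.2 ⟨j, Finset.mem_filter.2 ⟨Finset.mem_univ _, rfl⟩⟩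
    have hcard1 : (Finset.univ.filter (fun j' => f j' = f j)).card = 1 := by omega
    rw [hterm f hf]
    refine Finset.prod_eq_zero (Finset.mem_image_of_mem f (Finset.mem_univ j)) ?_
    rw [hcard1, ]
    simp only [pow_one]
    exact (hmom (f j) (hfA j)).1
  have hchain : ∫ ω, (∑ a ∈ A, Y a ω) ^ n ∂P
      ≤ ∑ f ∈ NS, p ^ ((Finset.univ.image f).card) := by
    rw [hstep1]
    rw [← Finset.sum_subset (Finset.filter_subset _ F) (fun f hf hnf => hvanish f hf hnf)]
    refine Finset.sum_le_sum ?_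
    intro f hf
    have hfF : f ∈ F := (Finset.mem_filter.1 hf).1
    have hfA : ∀ j, f j ∈ A := fun j => Fintype.mem_piFinset.1 hfF j
    have hcond := (Finset.mem_filter.1 hf).2
    rw [hterm f hfF]
    refine le_trans (le_abs_self _) ?_
    rw [Finset.abs_prod]
    calc ∏ b ∈ Finset.univ.image f,
          |∫ ω, (Y b ω) ^ ((Finset.univ.filter (fun j => f j = b)).card) ∂P|
        ≤ ∏ _b ∈ Finset.univ.image f, p := by
          refine Finset.prod_le_prod (fun b _ => abs_nonneg _) ?_
          intro b hb
          obtain ⟨j, _, rfl⟩ := Finset.mem_image.1 hb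
          exact (hmom (f j) (hfA j)).2 _ (hcond j)
      _ = p ^ ((Finset.univ.image f).card) := Finset.prod_const p
  exact le_trans hchain (count_bound A a₀ ha₀ p hp0 m)

lemma tail_bound {α : Type*} (A : Finset α) (h : α → Ω → ℝ) (p : ℝ)
    (hp0 : 0 ≤ p) (hp1 : p ≤ 1)
    (hmeas : ∀ a, Measurable (h a)) (h01 : ∀ a ∈ A, ∀ ω, h a ω = 0 ∨ h a ω = 1)
    (hPr : ∀ a ∈ A, P {ω | h a ω = 1} = ENNReal.ofReal p)
    (m : ℕ)
    (hindep : ∀ s : Finset α, s ⊆ A → s.card ≤ 2 * m →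
      iIndepFun
        (fun q : ↥s => h ↑q) P)
    (t : ℝ) (ht : 0 < t)
    (ht2 : 40 * m * max ((A.card : ℝ) * p) ((2 * m : ℕ) : ℝ) ≤ t ^ 2) :
    P {ω | t < |(∑ a ∈ A, h a ω) - (A.card : ℝ) * p|}
      ≤ ENNReal.ofReal ((1 / 5 : ℝ) ^ m) := by
  classical
  set μ := (A.card : ℝ) * p with hμdef
  set Mx := max ((A.card : ℝ) * p) ((2 * m : ℕ) : ℝ) with hMxdef
  have hMx0 : (0 : ℝ) ≤ Mx := le_trans (Nat.cast_nonneg _) (le_max_right _ _)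
  set Fn : Ω → ℝ := fun ω => (∑ a ∈ A, (h a ω - p)) ^ (2 * m) with hFn
  have hrw : ∀ ω, ∑ a ∈ A, (h a ω - p) = (∑ a ∈ A, h a ω) - μ := by
    intro ω
    rw [Finset.sum_sub_distrib, Finset.sum_const, nsmul_eq_mul]
  have hF0 : ∀ ω, 0 ≤ Fn ω := fun ω => (even_two_mul m).pow_nonneg _
  have hFmeas : Measurable Fn :=
    (Finset.measurable_sum A (fun a _ => (hmeas a).sub measurable_const)).pow_const _
  have habs : ∀ ω, |∑ a ∈ A, (h a ω - p)| ≤ (A.card : ℝ) := by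
    intro ω
    refine le_trans (Finset.abs_sum_le_sum_abs _ _) ?_
    calc ∑ a ∈ A, |h a ω - p| ≤ ∑ _a ∈ A, (1 : ℝ) :=
          Finset.sum_le_sum (fun a ha => by
            rcases h01 a ha ω with h0 | h1
            · rw [h0]; rw [abs_le]; constructor <;> linarith
            · rw [h1]; rw [abs_le]; constructor <;> linarith)
      _ = (A.card : ℝ) := by rw [Finset.sum_const, nsmul_eq_mul, mul_one]
  have hFint : Integrable Fn P := by
    refine integrable_of_abs_le hFmeas (C := (A.card : ℝ) ^ (2 * m)) ?_
    intro ω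
    rw [hFn, abs_pow]
    exact pow_le_pow_left₀ (abs_nonneg _) (habs ω) _
  have hmomb := moment_bound A h p hp0 hp1 hmeas h01 hPr m hindep
  have hmar := MeasureTheory.mul_meas_ge_le_integral_of_nonneg
    (Filter.Eventually.of_forall hF0) hFint (t ^ (2 * m))
  have hsub : {ω | t < |(∑ a ∈ A, h a ω) - μ|} ⊆ {ω | t ^ (2 * m) ≤ Fn ω} := by
    intro ω hω
    simp only [Set.mem_setOf_eq] at hω ⊢
    have h1 : t ≤ |(∑ a ∈ A, h a ω) - μ| := le_of_lt hω
    have hFn' : Fn ω = ((∑ a ∈ A, h a ω) - μ) ^ (2 * m) := by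
      rw [hFn]
      simp only []
      rw [hrw ω]
    calc t ^ (2 * m) ≤ |(∑ a ∈ A, h a ω) - μ| ^ (2 * m) :=
          pow_le_pow_left₀ ht.le h1 _
      _ = ((∑ a ∈ A, h a ω) - μ) ^ (2 * m) := by
          rw [pow_abs]
          exact abs_of_nonneg ((even_two_mul m).pow_nonneg _)
      _ = Fn ω := hFn'.symm
  have hEble : ∫ ω, Fn ω ∂P ≤ (1 / 5 : ℝ) ^ m * t ^ (2 * m) := by
    refine le_trans hmomb ?_
    have e1 : (4 : ℝ) ^ m * ((2 * m : ℕ) : ℝ) ^ m * Mx ^ m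
        = (4 * ((2 * m : ℕ) : ℝ) * Mx) ^ m := by
      rw [mul_pow, mul_pow]
    have h5 : 4 * ((2 * m : ℕ) : ℝ) * Mx ≤ t ^ 2 / 5 := by
      push_cast
      push_cast at ht2
      nlinarith [ht2]
    calc (4 : ℝ) ^ m * ((2 * m : ℕ) : ℝ) ^ m * Mx ^ m
        = (4 * ((2 * m : ℕ) : ℝ) * Mx) ^ m := e1
      _ ≤ (t ^ 2 / 5) ^ m := pow_le_pow_left₀ (by positivity) h5 m
      _ = (1 / 5 : ℝ) ^ m * t ^ (2 * m) := by
          rw [div_pow, pow_mul, div_pow, one_pow]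
          ring
  have hkey : (P {ω | t ^ (2 * m) ≤ Fn ω}).toReal ≤ (1 / 5 : ℝ) ^ m := by
    have htpos : 0 < t ^ (2 * m) := pow_pos ht _
    have hcomb : t ^ (2 * m) * (P {ω | t ^ (2 * m) ≤ Fn ω}).toReal
        ≤ (1 / 5 : ℝ) ^ m * t ^ (2 * m) := le_trans hmar hEble
    have := hcomb
    rw [mul_comm] at this
    exact le_of_mul_le_mul_right this htpos
  calc P {ω | t < |(∑ a ∈ A, h a ω) - (A.card : ℝ) * p|}
      ≤ P {ω | t ^ (2 * m) ≤ Fn ω} := measure_mono hsub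
    _ = ENNReal.ofReal ((P {ω | t ^ (2 * m) ≤ Fn ω}).toReal) :=
        (ENNReal.ofReal_toReal (measure_ne_top _ _)).symm
    _ ≤ ENNReal.ofReal ((1 / 5 : ℝ) ^ m) := ENNReal.ofReal_le_ofReal hkey

end MomentTail

section Numeric

lemma tsq_bound (ε lam μ : ℝ) (hε0 : 0 < ε) (hε1 : ε < 1 / 2) (hlam : 0 < lam)
    (hμ : 0 ≤ μ) (m : ℕ) (hm : ((2 * m : ℕ) : ℝ) = lam) :
    40 * m * max μ ((2 * m : ℕ) : ℝ)
      ≤ (max (4 * 10 ^ 3 * ε⁻¹ * lam) (0.01 * ε * μ)) ^ 2 := by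
  have hColl : (40 : ℝ) * m = 20 * lam := by rw [← hm]; push_cast; ring
  have hinvpos : 0 < ε⁻¹ := inv_pos.2 hε0
  have hεε : ε * ε⁻¹ = 1 := mul_inv_cancel₀ (ne_of_gt hε0)
  have hinv2 : 2 ≤ ε⁻¹ := by nlinarith
  have hsq4 : 4 ≤ ε⁻¹ ^ 2 := by nlinarith
  have hone : ε ^ 2 * ε⁻¹ ^ 2 = 1 := by
    rw [← mul_pow, hεε]; norm_num
  rw [hm]
  by_cases hcase : μ ≤ 4 * 10 ^ 5 * ε⁻¹ ^ 2 * lam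
  · have hlamle : lam ≤ 4 * 10 ^ 5 * ε⁻¹ ^ 2 * lam := by
      have h0 : (0:ℝ) ≤ (4 * 10 ^ 5 * ε⁻¹ ^ 2 - 1) * lam := by
        apply mul_nonneg _ hlam.le
        nlinarith
      linarith
    have hmaxle : max μ lam ≤ 4 * 10 ^ 5 * ε⁻¹ ^ 2 * lam := max_le hcase hlamle
    have ht1 : 4 * 10 ^ 3 * ε⁻¹ * lam
        ≤ max (4 * 10 ^ 3 * ε⁻¹ * lam) (0.01 * ε * μ) := le_max_left _ _
    have hb : (4 * 10 ^ 3 * ε⁻¹ * lam) ^ 2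
        ≤ (max (4 * 10 ^ 3 * ε⁻¹ * lam) (0.01 * ε * μ)) ^ 2 :=
      pow_le_pow_left₀ (by positivity) ht1 2
    have hmax0 : 0 ≤ max μ lam := le_trans hlam.le (le_max_right _ _)
    calc 40 * (m : ℝ) * max μ lam = 20 * lam * max μ lam := by rw [hColl]
      _ ≤ 20 * lam * (4 * 10 ^ 5 * ε⁻¹ ^ 2 * lam) :=
          mul_le_mul_of_nonneg_left hmaxle (by positivity)
      _ ≤ (4 * 10 ^ 3 * ε⁻¹ * lam) ^ 2 := by nlinarith [sq_nonneg (ε⁻¹ * lam)]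
      _ ≤ _ := hb
  · push_neg at hcase
    have hlamle : lam ≤ μ := by
      have h0 : (0:ℝ) ≤ (4 * 10 ^ 5 * ε⁻¹ ^ 2 - 1) * lam := by
        apply mul_nonneg _ hlam.le
        nlinarith
      linarith
    have hmaxeq : max μ lam = μ := max_eq_left hlamle
    have ht2 : 0.01 * ε * μ ≤ max (4 * 10 ^ 3 * ε⁻¹ * lam) (0.01 * ε * μ) :=
      le_max_right _ _
    have hb : (0.01 * ε * μ) ^ 2
        ≤ (max (4 * 10 ^ 3 * ε⁻¹ * lam) (0.01 * ε * μ)) ^ 2 :=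
      pow_le_pow_left₀ (by positivity) ht2 2
    have key2 : 4 * 10 ^ 5 * lam ≤ ε ^ 2 * μ := by
      have h0 : ε ^ 2 * (4 * 10 ^ 5 * ε⁻¹ ^ 2 * lam) ≤ ε ^ 2 * μ :=
        mul_le_mul_of_nonneg_left hcase.le (sq_nonneg ε)
      have h1 : ε ^ 2 * (4 * 10 ^ 5 * ε⁻¹ ^ 2 * lam) = 4 * 10 ^ 5 * lam := by
        calc ε ^ 2 * (4 * 10 ^ 5 * ε⁻¹ ^ 2 * lam) = 4 * 10 ^ 5 * (ε ^ 2 * ε⁻¹ ^ 2) * lam := by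
              ring
          _ = 4 * 10 ^ 5 * lam := by rw [hone]; ring
      linarith
    calc 40 * (m : ℝ) * max μ lam = 20 * lam * μ := by rw [hColl, hmaxeq]
      _ ≤ (0.01 * ε * μ) ^ 2 := by
          nlinarith [mul_le_mul_of_nonneg_right key2 hμ, mul_nonneg hlam.le hμ]
      _ ≤ _ := hb

lemma pow_five_le (L : ℕ) (δ : ℝ) (hδ0 : 0 < δ) (hδ1 : δ < 1 / 2) (m : ℕ)
    (hm : 10 * ((L : ℝ) + Real.logb 2 (1 / δ) + 1) ≤ 2 * m) :
    ((1 : ℝ) / 5) ^ m ≤ δ / (10 * ((L : ℝ) + 1)) := by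
  have h1δ : (2 : ℝ) ≤ 1 / δ := by
    rw [le_div_iff₀ hδ0]; linarith
  have h1δ' : (1 : ℝ) ≤ 1 / δ := by linarith
  set R := Real.logb 2 (1 / δ) with hR
  have hR2 : (2 : ℝ) ^ R = 1 / δ :=
    Real.rpow_logb (by norm_num) (by norm_num) (by positivity)
  -- key : 10 * (L+1) ≤ δ * 4^m
  have hnat : 10 * (L + 1) ≤ 2 ^ (10 * L + 10) := by
    have h1 : L + 1 < 2 ^ (L + 1) := Nat.lt_two_pow_self
    have h2 : 2 ^ (L + 5) ≤ 2 ^ (10 * L + 10) := Nat.pow_le_pow_right (by norm_num) (by omega)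
    calc 10 * (L + 1) ≤ 16 * (L + 1) := by omega
      _ ≤ 16 * 2 ^ (L + 1) := by
          exact Nat.mul_le_mul_left 16 h1.le
      _ = 2 ^ (L + 5) := by rw [pow_add]; ring
      _ ≤ 2 ^ (10 * L + 10) := h2
  have hnatR : (10 : ℝ) * ((L : ℝ) + 1) ≤ (2 : ℝ) ^ (10 * L + 10 : ℕ) := by
    exact_mod_cast hnat
  have hrpow1 : (2 : ℝ) ^ ((10 * (L : ℝ) + 10) + 10 * R) ≤ (2 : ℝ) ^ (2 * (m : ℝ)) := by
    apply Real.rpow_le_rpow_left_iff (by norm_num : (1 : ℝ) < 2) |>.2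
    linarith
  have hsplit : (2 : ℝ) ^ ((10 * (L : ℝ) + 10) + 10 * R)
      = (2 : ℝ) ^ (10 * (L : ℝ) + 10) * ((2 : ℝ) ^ R) ^ (10 : ℕ) := by
    rw [Real.rpow_add (by norm_num : (0 : ℝ) < 2)]
    congr 1
    rw [← Real.rpow_natCast ((2 : ℝ) ^ R) 10, ← Real.rpow_mul (by norm_num : (0 : ℝ) ≤ 2)]
    norm_num
    ring_nf
  have hbase1 : (2 : ℝ) ^ (10 * (L : ℝ) + 10) = (2 : ℝ) ^ (10 * L + 10 : ℕ) := by
    rw [← Real.rpow_natCast (2 : ℝ) (10 * L + 10)]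
    congr 1
    push_cast
    ring
  have hrpow2 : (2 : ℝ) ^ (2 * (m : ℝ)) = (4 : ℝ) ^ m := by
    rw [show (2 : ℝ) * (m : ℝ) = ((2 * m : ℕ) : ℝ) by push_cast; ring,
      Real.rpow_natCast, pow_mul]
    norm_num
  have hδpow : (1 / δ) ≤ (1 / δ) ^ (10 : ℕ) := le_self_pow₀ h1δ' (by norm_num)
  have hkey : 10 * ((L : ℝ) + 1) ≤ δ * 4 ^ m := by
    have c1 : (2 : ℝ) ^ (10 * L + 10 : ℕ) * (1 / δ) ≤ (4 : ℝ) ^ m := by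
      calc (2 : ℝ) ^ (10 * L + 10 : ℕ) * (1 / δ)
          ≤ (2 : ℝ) ^ (10 * L + 10 : ℕ) * (1 / δ) ^ (10 : ℕ) := by
            exact mul_le_mul_of_nonneg_left hδpow (by positivity)
        _ = (2 : ℝ) ^ (10 * (L : ℝ) + 10) * ((2 : ℝ) ^ R) ^ (10 : ℕ) := by
            rw [hbase1, hR2]
        _ = (2 : ℝ) ^ ((10 * (L : ℝ) + 10) + 10 * R) := hsplit.symm
        _ ≤ (2 : ℝ) ^ (2 * (m : ℝ)) := hrpow1
        _ = (4 : ℝ) ^ m := hrpow2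
    have c2 : 10 * ((L : ℝ) + 1) * (1 / δ) ≤ (4 : ℝ) ^ m := by
      refine le_trans ?_ c1
      exact mul_le_mul_of_nonneg_right hnatR (by positivity)
    calc 10 * ((L : ℝ) + 1) = δ * (10 * ((L : ℝ) + 1) * (1 / δ)) := by
          field_simp
      _ ≤ δ * 4 ^ m := mul_le_mul_of_nonneg_left c2 hδ0.le
  have h45 : ((1 : ℝ) / 5) ^ m ≤ ((1 : ℝ) / 4) ^ m :=
    pow_le_pow_left₀ (by norm_num) (by norm_num) m
  refine le_trans h45 ?_
  rw [div_pow, one_pow, div_le_div_iff₀ (by positivity) (by positivity)]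
  linarith [hkey]

end Numeric

open ProbabilityTheory in
/-- for λ-wise independent Bernoulli samples `h′_i(p)` with success
probability `min(4·10⁴·ε⁻²·γ⁻¹·λ/T_i(o), 1)`, with probability at least `1 − δ/10`,
simultaneously for every level `i` with `T_i(o) ≥ 4·10⁴·ε⁻²·γ⁻¹·λ`, the sample count
`Σ_{p∈Q_i} h′_i(p)` is within additive error `4·10³·ε⁻¹·λ` or within multiplicative
error `1 ± 0.01·ε` of its mean `|Q_i|·4·10⁴·ε⁻²·γ⁻¹·λ/T_i(o)`. -/
theorem level_sample_concentration
    (d k L Δ : ℕ) (hd : 1 ≤ d) (hk : 1 ≤ k) (hL : 1 ≤ L) (hΔ : Δ = 2 ^ L)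
    (v : Pt d) (Q : Finset (Pt d))
    (hQ : ∀ p ∈ Q, ∀ α : Fin d, ∃ m : ℤ, 1 ≤ m ∧ m ≤ (Δ : ℤ) ∧ p α = (m : ℝ))
    (o : ℝ) (ho : 0 < o)
    (zhat : ℤ → (Fin d → ℤ) → ℝ)
    (hz : ZhatAccurate d k L Δ Q v o zhat)
    (ε : ℝ) (hε0 : 0 < ε) (hε1 : ε < 1 / 2)
    (δ : ℝ) (hδ0 : 0 < δ) (hδ1 : δ < 1 / 2)
    (lam : ℕ) (hlamEven : Even lam) (hlamPos : 0 < lam)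
    (hlam : 10 * ((d : ℝ) * (L : ℝ) + Real.logb 2 (1 / δ) + 1) ≤ (lam : ℝ))
    {Ω : Type} [MeasurableSpace Ω] (P : Measure Ω) [IsProbabilityMeasure P]
    (h' : ℕ → Pt d → Ω → ℝ)
    (hmeas : ∀ i : ℕ, ∀ p : Pt d, Measurable (h' i p))
    (h01 : ∀ i : ℕ, i ≤ L → ∀ p ∈ Q, ∀ ω : Ω, h' i p ω = 0 ∨ h' i p ω = 1)
    (hprob : ∀ i : ℕ, i ≤ L → ∀ p ∈ Q,
      P {ω | h' i p ω = 1} =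
        ENNReal.ofReal (min
          (4 * 10 ^ 4 * ε⁻¹ ^ 2 * (gammaPar d L ε)⁻¹ * (lam : ℝ) / Tthr d k Δ o i) 1))
    (hindep : ∀ i : ℕ, i ≤ L → ∀ s : Finset (Pt d), s ⊆ Q → s.card ≤ lam →
      iIndepFun
        (fun p : ↥s => h' i ↑p) P) :
    ENNReal.ofReal (1 - δ / 10) ≤
      P {ω | ∀ i : ℕ, i ≤ L →
        4 * 10 ^ 4 * ε⁻¹ ^ 2 * (gammaPar d L ε)⁻¹ * (lam : ℝ) ≤ Tthr d k Δ o i →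
          (|(∑ p ∈ Qlevel d k L Δ Q v o zhat i, h' i p ω) -
              ((Qlevel d k L Δ Q v o zhat i).card : ℝ) *
                (4 * 10 ^ 4 * ε⁻¹ ^ 2 * (gammaPar d L ε)⁻¹ * (lam : ℝ) /
                  Tthr d k Δ o i)| ≤ 4 * 10 ^ 3 * ε⁻¹ * (lam : ℝ)) ∨
          ((1 - 0.01 * ε) * (((Qlevel d k L Δ Q v o zhat i).card : ℝ) *
                (4 * 10 ^ 4 * ε⁻¹ ^ 2 * (gammaPar d L ε)⁻¹ * (lam : ℝ) /
                  Tthr d k Δ o i)) ≤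
              (∑ p ∈ Qlevel d k L Δ Q v o zhat i, h' i p ω) ∧
            (∑ p ∈ Qlevel d k L Δ Q v o zhat i, h' i p ω) ≤
              (1 + 0.01 * ε) * (((Qlevel d k L Δ Q v o zhat i).card : ℝ) *
                (4 * 10 ^ 4 * ε⁻¹ ^ 2 * (gammaPar d L ε)⁻¹ * (lam : ℝ) /
                  Tthr d k Δ o i)))} := by
  classical
  obtain ⟨m, hmEven⟩ := hlamEven
  have hm2 : lam = 2 * m := by omega
  set γ : ℝ := gammaPar d L ε with hγdef
  have hL1 : (1 : ℝ) ≤ (L : ℝ) := by exact_mod_cast hL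
  have hd1 : (1 : ℝ) ≤ (d : ℝ) := by exact_mod_cast hd
  have hγpos : 0 < γ := by
    rw [hγdef]
    unfold gammaPar
    apply div_pos hε0
    have hLpos : (0:ℝ) < (L:ℝ) := by linarith
    have hdpos : (0:ℝ) < (d:ℝ) := by linarith
    have := pow_pos hdpos 3
    nlinarith
  have hlamR : (0 : ℝ) < (lam : ℝ) := by exact_mod_cast hlamPos
  set C : ℝ := 4 * 10 ^ 4 * ε⁻¹ ^ 2 * γ⁻¹ * (lam : ℝ) with hCdef
  have hCpos : 0 < C := by
    rw [hCdef]
    have h1 : 0 < ε⁻¹ := inv_pos.2 hε0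
    have h2 : 0 < γ⁻¹ := inv_pos.2 hγpos
    positivity
  have hTpos : ∀ i : ℕ, 0 < Tthr d k Δ o (i : ℤ) := by
    intro i
    unfold Tthr gside
    have hΔpos : (0 : ℝ) < (Δ : ℝ) := by
      rw [hΔ]; push_cast; positivity
    have hgpos : (0 : ℝ) < (Δ : ℝ) / (2 : ℝ) ^ (i : ℤ) :=
      div_pos hΔpos (zpow_pos (by norm_num) _)
    have hdpos : (0 : ℝ) < (d : ℝ) := by linarith
    have hkpos : (0 : ℝ) < (k : ℝ) := by exact_mod_cast hk
    have h1 : 0 < ((d : ℝ) / ((Δ : ℝ) / (2 : ℝ) ^ (i : ℤ))) ^ 2 :=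
      pow_pos (div_pos hdpos hgpos) 2
    exact div_pos (mul_pos h1 ho) (by positivity)
  set Bad : ℕ → Set Ω := fun i =>
    {ω | C ≤ Tthr d k Δ o (i : ℤ) ∧
      max (4 * 10 ^ 3 * ε⁻¹ * (lam : ℝ))
        (0.01 * ε * (((Qlevel d k L Δ Q v o zhat i).card : ℝ) *
          (C / Tthr d k Δ o (i : ℤ))))
      < |(∑ q ∈ Qlevel d k L Δ Q v o zhat i, h' i q ω) -
          ((Qlevel d k L Δ Q v o zhat i).card : ℝ) * (C / Tthr d k Δ o (i : ℤ))|}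
    with hBad
  have hm1 : 1 ≤ m := by omega
  have hbadP : ∀ i ∈ Finset.range (L + 1), P (Bad i) ≤ ENNReal.ofReal ((1 / 5 : ℝ) ^ m) := by
    intro i hi
    have hiL : i ≤ L := by
      have := Finset.mem_range.1 hi; omega
    by_cases hcond : C ≤ Tthr d k Δ o (i : ℤ)
    · set A : Finset (Pt d) := Qlevel d k L Δ Q v o zhat i with hA
      set pp : ℝ := C / Tthr d k Δ o (i : ℤ) with hpp
      have hTp := hTpos i
      have hp0 : 0 ≤ pp := le_of_lt (div_pos hCpos hTp)
      have hp1 : pp ≤ 1 := by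
        rw [hpp, div_le_one hTp]; exact hcond
      have hAQ : A ⊆ Q := by
        rw [hA]; unfold Qlevel; exact Finset.filter_subset _ _
      have hBadeq : Bad i = {ω |
          max (4 * 10 ^ 3 * ε⁻¹ * (lam : ℝ)) (0.01 * ε * ((A.card : ℝ) * pp))
          < |(∑ q ∈ A, h' i q ω) - (A.card : ℝ) * pp|} := by
        rw [hBad]
        ext ω
        simp only [Set.mem_setOf_eq]
        exact and_iff_right hcond
      rw [hBadeq]
      have hmcast : ((2 * m : ℕ) : ℝ) = (lam : ℝ) := by
        rw [hm2]
      refine tail_bound A (h' i) pp hp0 hp1 (fun a => hmeas i a)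
        (fun a ha ω => h01 i hiL a (hAQ ha) ω)
        (fun a ha => ?_) m
        (fun s hs hcard => hindep i hiL s (hs.trans hAQ) (by omega)) _
        ?_ ?_
      · rw [hprob i hiL a (hAQ ha)]
        congr 1
        exact min_eq_left hp1
      · exact lt_of_lt_of_le (by positivity) (le_max_left _ _)
      · have := tsq_bound ε (lam : ℝ) ((A.card : ℝ) * pp) hε0 hε1 hlamR
          (by positivity) m hmcast
        calc 40 * (m : ℝ) * max ((A.card : ℝ) * pp) ((2 * m : ℕ) : ℝ)
            ≤ (max (4 * 10 ^ 3 * ε⁻¹ * (lam : ℝ))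
                (0.01 * ε * ((A.card : ℝ) * pp))) ^ 2 := this
          _ = _ := rfl
    · have hBadeq : Bad i = ∅ := by
        rw [hBad]
        ext ω
        simp [hcond]
      rw [hBadeq]
      simp
  have hcompl : ∀ ω : Ω, (¬ (∀ i : ℕ, i ≤ L →
      C ≤ Tthr d k Δ o (i : ℤ) →
        (|(∑ q ∈ Qlevel d k L Δ Q v o zhat i, h' i q ω) -
            ((Qlevel d k L Δ Q v o zhat i).card : ℝ) *
              (C / Tthr d k Δ o (i : ℤ))| ≤ 4 * 10 ^ 3 * ε⁻¹ * (lam : ℝ)) ∨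
        ((1 - 0.01 * ε) * (((Qlevel d k L Δ Q v o zhat i).card : ℝ) *
              (C / Tthr d k Δ o (i : ℤ))) ≤
            (∑ q ∈ Qlevel d k L Δ Q v o zhat i, h' i q ω) ∧
          (∑ q ∈ Qlevel d k L Δ Q v o zhat i, h' i q ω) ≤
            (1 + 0.01 * ε) * (((Qlevel d k L Δ Q v o zhat i).card : ℝ) *
              (C / Tthr d k Δ o (i : ℤ))))))
      → ω ∈ ⋃ i ∈ Finset.range (L + 1), Bad i := by
    intro ω hω
    push_neg at hω
    obtain ⟨i, hiL, hcond, h1, h2⟩ := hω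
    set S := ∑ q ∈ Qlevel d k L Δ Q v o zhat i, h' i q ω with hS
    set μi := ((Qlevel d k L Δ Q v o zhat i).card : ℝ) * (C / Tthr d k Δ o (i : ℤ))
      with hμi
    have hbmax : 0.01 * ε * μi < |S - μi| := by
      rcases lt_or_ge S ((1 - 0.01 * ε) * μi) with hlt | hge
      · have hexp : (1 - 0.01 * ε) * μi = μi - 0.01 * ε * μi := by ring
        have : 0.01 * ε * μi < μi - S := by rw [hexp] at hlt; linarith
        calc 0.01 * ε * μi < μi - S := this
          _ ≤ |μi - S| := le_abs_self _
          _ = |S - μi| := abs_sub_comm _ _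
      · have hgt := h2 hge
        have hexp : (1 + 0.01 * ε) * μi = μi + 0.01 * ε * μi := by ring
        have : 0.01 * ε * μi < S - μi := by rw [hexp] at hgt; linarith
        exact lt_of_lt_of_le this (le_abs_self _)
    refine Set.mem_iUnion₂.2 ⟨i, Finset.mem_range.2 (by omega), ?_⟩
    rw [hBad]
    exact ⟨hcond, max_lt h1 hbmax⟩
  -- generic final step
  have final : ∀ G : Set Ω, Gᶜ ⊆ (⋃ i ∈ Finset.range (L + 1), Bad i) →
      ENNReal.ofReal (1 - δ / 10) ≤ P G := by
    intro G hGc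
    have hPGc : P Gᶜ ≤ ENNReal.ofReal (δ / 10) := by
      have hfive : ((1 : ℝ) / 5) ^ m ≤ δ / (10 * ((L : ℝ) + 1)) := by
        refine pow_five_le L δ hδ0 hδ1 m ?_
        have hdL : (L : ℝ) ≤ (d : ℝ) * (L : ℝ) := by nlinarith
        have hcast : (lam : ℝ) = 2 * (m : ℝ) := by rw [hm2]; push_cast; ring
        rw [← hcast]
        calc 10 * ((L : ℝ) + Real.logb 2 (1 / δ) + 1)
            ≤ 10 * ((d : ℝ) * (L : ℝ) + Real.logb 2 (1 / δ) + 1) := by linarith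
          _ ≤ (lam : ℝ) := hlam
      calc P Gᶜ ≤ P (⋃ i ∈ Finset.range (L + 1), Bad i) := measure_mono hGc
        _ ≤ ∑ i ∈ Finset.range (L + 1), P (Bad i) :=
            measure_biUnion_finset_le _ _
        _ ≤ ∑ _i ∈ Finset.range (L + 1), ENNReal.ofReal ((1 / 5 : ℝ) ^ m) :=
            Finset.sum_le_sum hbadP
        _ = (L + 1) • ENNReal.ofReal ((1 / 5 : ℝ) ^ m) := by
            rw [Finset.sum_const, Finset.card_range]
        _ = ENNReal.ofReal (((L + 1 : ℕ) : ℝ) * (1 / 5 : ℝ) ^ m) := by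
            rw [nsmul_eq_mul, ← ENNReal.ofReal_natCast (L + 1),
              ← ENNReal.ofReal_mul (by positivity)]
        _ ≤ ENNReal.ofReal (δ / 10) := by
            refine ENNReal.ofReal_le_ofReal ?_
            have hLpos : (0 : ℝ) < (L : ℝ) + 1 := by positivity
            calc ((L + 1 : ℕ) : ℝ) * (1 / 5 : ℝ) ^ m
                ≤ ((L + 1 : ℕ) : ℝ) * (δ / (10 * ((L : ℝ) + 1))) := by
                  refine mul_le_mul_of_nonneg_left hfive (by positivity)
              _ = δ / 10 := by
                  push_cast
                  field_simp
    have huniv : (1 : ENNReal) ≤ P G + P Gᶜ := by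
      calc (1 : ENNReal) = P Set.univ := measure_univ.symm
        _ = P (G ∪ Gᶜ) := by rw [Set.union_compl_self]
        _ ≤ P G + P Gᶜ := measure_union_le _ _
    calc ENNReal.ofReal (1 - δ / 10)
        = ENNReal.ofReal 1 - ENNReal.ofReal (δ / 10) :=
          ENNReal.ofReal_sub 1 (by positivity)
      _ = 1 - ENNReal.ofReal (δ / 10) := by rw [ENNReal.ofReal_one]
      _ ≤ P G := by
          rw [tsub_le_iff_right]
          calc (1 : ENNReal) ≤ P G + P Gᶜ := huniv
            _ ≤ P G + ENNReal.ofReal (δ / 10) := add_le_add_right hPGc _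
  refine final _ ?_
  intro ω hω
  exact hcompl ω hω

end
end

section
/- For every i ∈ {1,…,L}, every p ∈ Q_i, and every finite nonempty Z ⊆ ℝ^d, the parent cell C = c_{i−1}(p) satisfies C ∩ Q^I ≠ ∅ and dist(p,Z)² ≤ 2·d·g_{i−1}² + (2/|C ∩ Q^I|)·Σ_{q∈C∩Q^I} dist(q,Z)². -/
open scoped BigOperators Classical
open MeasureTheory

noncomputable section

lemma gside_pos {Δ : ℕ} (hΔ : 0 < Δ) (i : ℤ) : 0 < gside Δ i := by
  unfold gside
  have h : (0:ℝ) < (Δ:ℝ) := by exact_mod_cast hΔ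
  positivity

lemma gside_sub_one (Δ : ℕ) (i : ℤ) : gside Δ (i - 1) = 2 * gside Δ i := by
  unfold gside
  rw [zpow_sub₀ (by norm_num : (2:ℝ) ≠ 0), zpow_one, div_div_eq_mul_div]
  ring

lemma gside_scale {Δ : ℕ} {j i : ℤ} (h : j ≤ i) :
    gside Δ j = (((2 : ℤ) ^ (i - j).toNat : ℤ) : ℝ) * gside Δ i := by
  unfold gside
  have h2 : (2:ℝ) ^ i ≠ 0 := by positivity
  have h2' : (2:ℝ) ^ j ≠ 0 := by positivity
  push_cast
  rw [← zpow_natCast (2:ℝ) (i - j).toNat, Int.toNat_of_nonneg (by omega),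
    zpow_sub₀ (by norm_num : (2:ℝ) ≠ 0)]
  field_simp

lemma mem_cell_self {d : ℕ} (v : Pt d) {g : ℝ} (hg : 0 < g) (p : Pt d) :
    p ∈ cell d v g (idx d v g p) := by
  intro α
  have h1 := Int.floor_le ((p α - v α) / g)
  have h2 := Int.lt_floor_add_one ((p α - v α) / g)
  have h1' : (⌊(p α - v α) / g⌋ : ℝ) * g ≤ p α - v α := (le_div_iff₀ hg).mp h1
  have h2' : p α - v α < ((⌊(p α - v α) / g⌋ : ℝ) + 1) * g := (div_lt_iff₀ hg).mp h2
  exact ⟨by simpa [idx] using by linarith, by simpa [idx] using by linarith⟩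

lemma idx_eq_of_mem_cell {d : ℕ} {v : Pt d} {g : ℝ} (hg : 0 < g) {x : Pt d}
    {n : Fin d → ℤ} (hx : x ∈ cell d v g n) : idx d v g x = n := by
  funext α
  obtain ⟨h1, h2⟩ := hx α
  unfold idx
  rw [Int.floor_eq_iff]
  constructor
  · rw [le_div_iff₀ hg]; linarith
  · rw [div_lt_iff₀ hg]; push_cast; linarith

lemma floor_div_scaled {g : ℝ} (hg : 0 < g) {K : ℤ} (hK : 0 < K) {s : ℝ} {n : ℤ}
    (h1 : (n : ℝ) * g ≤ s) (h2 : s < ((n : ℝ) + 1) * g) :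
    ⌊s / ((K : ℝ) * g)⌋ = ⌊(n : ℝ) / (K : ℝ)⌋ := by
  have hK' : (0:ℝ) < (K:ℝ) := by exact_mod_cast hK
  set q := ⌊(n : ℝ) / (K : ℝ)⌋ with hq
  have hql : (q:ℝ) ≤ (n:ℝ) / K := Int.floor_le _
  have hqu : (n:ℝ)/K < q + 1 := Int.lt_floor_add_one _
  have hqK : (q:ℝ) * K ≤ n := by rwa [← le_div_iff₀ hK']
  have hnK : (n:ℝ) < ((q:ℝ)+1) * K := by rwa [← div_lt_iff₀ hK']
  have hnKi : n < (q+1) * K := by exact_mod_cast hnK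
  have hnK' : (n:ℝ) + 1 ≤ ((q:ℝ)+1)*K := by exact_mod_cast (by omega : n + 1 ≤ (q+1)*K)
  rw [Int.floor_eq_iff]
  constructor
  · rw [le_div_iff₀ (by positivity)]
    nlinarith
  · rw [div_lt_iff₀ (by positivity)]
    nlinarith

lemma idx_agree {d : ℕ} {v : Pt d} {g : ℝ} (hg : 0 < g) {K : ℤ} (hK : 0 < K)
    {x p : Pt d} {n : Fin d → ℤ} (hx : x ∈ cell d v g n) (hp : p ∈ cell d v g n) :
    idx d v ((K:ℝ) * g) x = idx d v ((K:ℝ) * g) p := by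
  funext α
  obtain ⟨hx1, hx2⟩ := hx α
  obtain ⟨hp1, hp2⟩ := hp α
  show ⌊(x α - v α) / ((K:ℝ) * g)⌋ = ⌊(p α - v α) / ((K:ℝ) * g)⌋
  rw [floor_div_scaled hg hK (n := n α) (by linarith) (by linarith),
      floor_div_scaled hg hK (n := n α) (by linarith) (by linarith)]

lemma idx_agree_level {d Δ : ℕ} {v : Pt d} (hΔ : 0 < Δ) {j i : ℤ} (hji : j ≤ i)
    {x p : Pt d} {n : Fin d → ℤ}
    (hx : x ∈ cell d v (gside Δ i) n) (hp : p ∈ cell d v (gside Δ i) n) :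
    idx d v (gside Δ j) x = idx d v (gside Δ j) p := by
  rw [gside_scale hji]
  exact idx_agree (gside_pos hΔ i) (by positivity) hx hp

lemma cell_subset_level {d Δ : ℕ} {v : Pt d} (hΔ : 0 < Δ) {j i : ℤ} (hji : j ≤ i) (p : Pt d) :
    cell d v (gside Δ i) (idx d v (gside Δ i) p) ⊆
      cell d v (gside Δ j) (idx d v (gside Δ j) p) := by
  intro x hx
  have hp := mem_cell_self v (gside_pos hΔ i) p
  have h := idx_agree_level hΔ hji hx hp
  rw [← h]
  exact mem_cell_self v (gside_pos hΔ j) x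

lemma crucial_heavy_anc {d k L Δ : ℕ} {Q : Finset (Pt d)} {v : Pt d} {o : ℝ}
    {zhat : ℤ → (Fin d → ℤ) → ℝ} (hΔ : 0 < Δ) {i : ℤ} {p : Pt d}
    (hc : Crucial d k L Δ Q v o zhat i (idx d v (gside Δ i) p))
    {j : ℤ} (hj1 : -1 ≤ j) (hj2 : j < i) :
    Heavy d k L Δ Q v o zhat j (idx d v (gside Δ j) p) :=
  hc.2.2.2 j hj1 hj2 _ (cell_subset_level hΔ (le_of_lt hj2) p)

lemma Tthr_pos {d k Δ : ℕ} (hd : 1 ≤ d) (hk : 1 ≤ k) (hΔ : 0 < Δ) {o : ℝ} (ho : 0 < o)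
    (i : ℤ) : 0 < Tthr d k Δ o i := by
  unfold Tthr
  have hg := gside_pos hΔ i
  have hd' : (0:ℝ) < (d:ℝ) := by exact_mod_cast hd
  have hk' : (0:ℝ) < (k:ℝ) := by exact_mod_cast hk
  positivity

lemma Tthr_succ (d k Δ : ℕ) (o : ℝ) (i : ℤ) :
    Tthr d k Δ o i = 4 * Tthr d k Δ o (i - 1) := by
  unfold Tthr
  rw [gside_sub_one, mul_comm (2:ℝ), div_mul_eq_div_div]
  ring
lemma gamma_pos {d L : ℕ} (hd : 1 ≤ d) (hL : 1 ≤ L) {ε : ℝ} (hε0 : 0 < ε) :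
    0 < gammaPar d L ε := by
  unfold gammaPar
  have hd' : (0:ℝ) < (d:ℝ) := by exact_mod_cast hd
  have hL' : (0:ℝ) < (L:ℝ) := by exact_mod_cast hL
  positivity

lemma gamma_lt {d L : ℕ} (hd : 1 ≤ d) (hL : 1 ≤ L) {ε : ℝ} (hε0 : 0 < ε) (hε1 : ε < 1/2) :
    gammaPar d L ε < 1/3200 := by
  unfold gammaPar
  have hd' : (1:ℝ) ≤ (d:ℝ) := by exact_mod_cast hd
  have hL' : (1:ℝ) ≤ (L:ℝ) := by exact_mod_cast hL
  have hd3 : (1:ℝ) ≤ (d:ℝ)^3 := one_le_pow₀ hd'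
  have hden : (1600:ℝ) ≤ 1600 * (L:ℝ) * (d:ℝ)^3 := by nlinarith
  rw [div_lt_iff₀ (by linarith)]
  nlinarith

lemma nearDist_le {d : ℕ} (q : Pt d) {Z : Finset (Pt d)} {z : Pt d} (hz : z ∈ Z) :
    nearDist d q Z ≤ dist q z := by
  apply csInf_le ((Z.finite_toSet.image _).bddBelow)
  exact ⟨z, hz, rfl⟩

lemma nearDist_exists {d : ℕ} (q : Pt d) {Z : Finset (Pt d)} (hZ : Z.Nonempty) :
    ∃ z ∈ Z, nearDist d q Z = dist q z := by
  obtain ⟨z0, hz0⟩ := hZ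
  have hne : ((dist q) '' (Z : Set (Pt d))).Nonempty := ⟨_, ⟨z0, hz0, rfl⟩⟩
  have hmem := hne.csInf_mem (Z.finite_toSet.image _)
  obtain ⟨z, hz, hzeq⟩ := hmem
  exact ⟨z, hz, hzeq.symm⟩

lemma dist_sq_le_of_mem_cell {d : ℕ} {v : Pt d} {g : ℝ} (hg : 0 < g) {x y : Pt d}
    {n : Fin d → ℤ} (hx : x ∈ cell d v g n) (hy : y ∈ cell d v g n) :
    dist x y ^ 2 ≤ (d:ℝ) * g ^ 2 := by
  rw [EuclideanSpace.dist_eq, Real.sq_sqrt (Finset.sum_nonneg fun α _ => sq_nonneg _)]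
  have hstep : ∀ α ∈ (Finset.univ : Finset (Fin d)), dist (x α) (y α) ^ 2 ≤ g ^ 2 := by
    intro α _
    obtain ⟨h1, h2⟩ := hx α
    obtain ⟨h3, h4⟩ := hy α
    have habs : |x α - y α| ≤ g := by
      rw [abs_le]; constructor <;> nlinarith
    rw [Real.dist_eq]
    nlinarith [abs_nonneg (x α - y α)]
  calc ∑ α, dist (x α) (y α) ^ 2 ≤ ∑ _α : Fin d, g ^ 2 := Finset.sum_le_sum hstep
    _ = (d:ℝ) * g ^ 2 := by
        simp [Finset.sum_const, Finset.card_univ, nsmul_eq_mul]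

lemma heavy_count_lb {d k L Δ : ℕ} {Q : Finset (Pt d)} {v : Pt d} {o : ℝ}
    {zhat : ℤ → (Fin d → ℤ) → ℝ} (hd : 1 ≤ d) (hk : 1 ≤ k) (hΔ : 0 < Δ) (ho : 0 < o)
    (hz : ZhatAccurate d k L Δ Q v o zhat)
    {j : ℤ} (hj0 : 0 ≤ j) (hjL : j ≤ (L:ℤ) - 1) {n : Fin d → ℤ}
    (hH : Heavy d k L Δ Q v o zhat j n) :
    0.9 * Tthr d k Δ o j ≤ (cellCount d Q v (gside Δ j) n : ℝ) := by
  rcases hH with ⟨h1, _⟩ | ⟨_, _, hcnt, hzge⟩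
  · omega
  · have hcnt0 : (0:ℝ) ≤ (cellCount d Q v (gside Δ j) n : ℝ) := Nat.cast_nonneg _
    have hT := Tthr_pos hd hk hΔ ho j
    rcases hz j hj0 hjL n hcnt with hA | ⟨hB1, hB2⟩
    · have h := abs_le.mp hA
      linarith [h.1, h.2]
    · linarith

lemma qlevel_card_ub {d k L Δ : ℕ} {Q : Finset (Pt d)} {v : Pt d} {o ε : ℝ}
    {zhat : ℤ → (Fin d → ℤ) → ℝ} {qhat : ℕ → ℝ}
    (hd : 1 ≤ d) (hk : 1 ≤ k) (hL : 1 ≤ L) (hΔ : 0 < Δ) (ho : 0 < o)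
    (hε0 : 0 < ε) (hε1 : ε < 1/2)
    (hq : QhatAccurate d k L Δ Q v o ε zhat qhat) {M : ℕ} (hM : M ≤ L)
    (hnotI : qhat M < gammaPar d L ε * Tthr d k Δ o M) :
    ((Qlevel d k L Δ Q v o zhat M).card : ℝ) ≤
      1.06 * gammaPar d L ε * Tthr d k Δ o M := by
  obtain ⟨hq0, hacc⟩ := hq M hM
  have hT := Tthr_pos hd hk hΔ ho (M:ℤ)
  have hγ := gamma_pos hd hL hε0
  have hγT : 0 < gammaPar d L ε * Tthr d k Δ o M := mul_pos hγ hT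
  have hc0 : (0:ℝ) ≤ ((Qlevel d k L Δ Q v o zhat M).card : ℝ) := Nat.cast_nonneg _
  rcases hacc with hA | ⟨hB1, hB2⟩
  · have h := abs_le.mp hA
    nlinarith [h.1, h.2]
  · nlinarith [mul_nonneg (by linarith : (0:ℝ) ≤ 1/2 - ε) hc0]
lemma exists_crucial_level {d k L Δ : ℕ} {Q : Finset (Pt d)} {v : Pt d} {o : ℝ}
    {zhat : ℤ → (Fin d → ℤ) → ℝ} (hL : 1 ≤ L) (hΔ : 0 < Δ)
    {r : Pt d} (hr : r ∈ Q) {t : ℕ} (ht : t ≤ L)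
    (Hanc : ∀ j : ℤ, -1 ≤ j → j < (t:ℤ) →
      Heavy d k L Δ Q v o zhat j (idx d v (gside Δ j) r)) :
    ∃ j' : ℕ, t ≤ j' ∧ j' ≤ L ∧ r ∈ Qlevel d k L Δ Q v o zhat j' := by
  classical
  set SS := (Finset.range (L+1)).filter
    (fun j => t ≤ j ∧ ¬ Heavy d k L Δ Q v o zhat (j:ℤ) (idx d v (gside Δ (j:ℤ)) r))
    with hSS
  have hLmem : L ∈ SS := by
    simp only [hSS, Finset.mem_filter, Finset.mem_range]
    refine ⟨by omega, ht, ?_⟩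
    rintro (⟨h1, -⟩ | ⟨-, h2, -⟩) <;> omega
  have hne : SS.Nonempty := ⟨L, hLmem⟩
  set j' := SS.min' hne with hj'
  have hj'mem : j' ∈ SS := SS.min'_mem hne
  rw [hSS, Finset.mem_filter, Finset.mem_range] at hj'mem
  obtain ⟨hj'L, hj't, hj'nh⟩ := hj'mem
  refine ⟨j', hj't, by omega, ?_⟩
  rw [Qlevel, Finset.mem_filter]
  refine ⟨hr, by positivity, by exact_mod_cast Nat.lt_succ_iff.mp hj'L, hj'nh, ?_⟩
  intro j hj1 hj2 m hsub
  have hrm : r ∈ cell d v (gside Δ j) m :=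
    hsub (mem_cell_self v (gside_pos hΔ _) r)
  have hmeq : idx d v (gside Δ j) r = m := idx_eq_of_mem_cell (gside_pos hΔ j) hrm
  rw [← hmeq]
  rcases lt_or_ge j (t:ℤ) with h | h
  · exact Hanc j hj1 h
  · by_contra hcon
    have hj0 : 0 ≤ j := le_trans (by exact_mod_cast Nat.zero_le t) h
    have hjt : (j.toNat : ℤ) = j := Int.toNat_of_nonneg hj0
    have hmem : j.toNat ∈ SS := by
      rw [hSS, Finset.mem_filter, Finset.mem_range]
      refine ⟨by omega, by omega, ?_⟩
      rw [hjt]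
      exact hcon
    have hle : j' ≤ j.toNat := SS.min'_le j.toNat hmem
    omega
/-- for every `i ∈ {1,…,L}`, every `p ∈ Q_i`, and every finite nonempty
`Z`, the parent cell `C = c_{i−1}(p)` satisfies `C ∩ Q^I ≠ ∅` and
`dist(p,Z)² ≤ 2·d·g_{i−1}² + (2/|C ∩ Q^I|)·Σ_{q∈C∩Q^I} dist(q,Z)²`. -/
theorem parent_cell_averaging
    (d k L Δ : ℕ) (hd : 1 ≤ d) (hk : 1 ≤ k) (hL : 1 ≤ L) (hΔ : Δ = 2 ^ L)
    (v : Pt d) (Q : Finset (Pt d))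
    (hQ : ∀ p ∈ Q, ∀ α : Fin d, ∃ m : ℤ, 1 ≤ m ∧ m ≤ (Δ : ℤ) ∧ p α = (m : ℝ))
    (o : ℝ) (ho : 0 < o)
    (zhat : ℤ → (Fin d → ℤ) → ℝ)
    (hz : ZhatAccurate d k L Δ Q v o zhat)
    (ε : ℝ) (hε0 : 0 < ε) (hε1 : ε < 1 / 2)
    (qhat : ℕ → ℝ)
    (hq : QhatAccurate d k L Δ Q v o ε zhat qhat) :
    ∀ i : ℕ, 1 ≤ i → i ≤ L → ∀ p ∈ Qlevel d k L Δ Q v o zhat i,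
      ∀ Z : Finset (Pt d), Z.Nonempty →
        ((QI d k L Δ Q v o ε zhat qhat).filter
            (fun q => q ∈ cell d v (gside Δ ((i : ℤ) - 1))
              (idx d v (gside Δ ((i : ℤ) - 1)) p))).Nonempty ∧
        nearDist d p Z ^ 2 ≤
          2 * (d : ℝ) * gside Δ ((i : ℤ) - 1) ^ 2 +
            (2 / (cellCount d (QI d k L Δ Q v o ε zhat qhat) v
                (gside Δ ((i : ℤ) - 1)) (idx d v (gside Δ ((i : ℤ) - 1)) p) : ℝ)) *
              ∑ q ∈ (QI d k L Δ Q v o ε zhat qhat).filter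
                  (fun q => q ∈ cell d v (gside Δ ((i : ℤ) - 1))
                    (idx d v (gside Δ ((i : ℤ) - 1)) p)),
                nearDist d q Z ^ 2 := by
  intro i hi1 hiL p hp Z hZ
  classical
  have hΔ0 : 0 < Δ := by rw [hΔ]; positivity
  have hg : 0 < gside Δ ((i:ℤ) - 1) := gside_pos hΔ0 _
  obtain ⟨hpQ, hpc⟩ := Finset.mem_filter.mp hp
  have hpC : p ∈ cell d v (gside Δ ((i:ℤ)-1)) (idx d v (gside Δ ((i:ℤ)-1)) p) :=
    mem_cell_self v hg p
  have hmain : ((QI d k L Δ Q v o ε zhat qhat).filter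
      (fun q => q ∈ cell d v (gside Δ ((i : ℤ) - 1))
        (idx d v (gside Δ ((i : ℤ) - 1)) p))).Nonempty := by
    by_contra hcon
    set SS := (Finset.range (L+1)).filter
      (fun j => i ≤ j ∧ ∃ q ∈ Qlevel d k L Δ Q v o zhat j,
        q ∈ cell d v (gside Δ ((i:ℤ)-1)) (idx d v (gside Δ ((i:ℤ)-1)) p)) with hSS
    have hiSS : i ∈ SS := by
      rw [hSS, Finset.mem_filter, Finset.mem_range]
      exact ⟨by omega, le_refl i, ⟨p, hp, hpC⟩⟩
    have hne : SS.Nonempty := ⟨i, hiSS⟩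
    set M := SS.max' hne with hM
    have hMmem : M ∈ SS := SS.max'_mem hne
    rw [hSS, Finset.mem_filter, Finset.mem_range] at hMmem
    obtain ⟨hML, hiM, q, hqM, hqC⟩ := hMmem
    have hML' : M ≤ L := by omega
    have hM1 : 1 ≤ M := le_trans hi1 hiM
    have hMnotI : qhat M < gammaPar d L ε * Tthr d k Δ o M := by
      by_contra hge
      push_neg at hge
      exact hcon ⟨q, Finset.mem_filter.mpr
        ⟨Finset.mem_biUnion.mpr ⟨M, Finset.mem_filter.mpr
          ⟨Finset.mem_range.mpr (by omega), hge⟩, hqM⟩, hqC⟩⟩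
    have hub := qlevel_card_ub hd hk hL hΔ0 ho hε0 hε1 hq hML' hMnotI
    obtain ⟨hqQ, hqcr⟩ := Finset.mem_filter.mp hqM
    have hHD : Heavy d k L Δ Q v o zhat ((M:ℤ)-1)
        (idx d v (gside Δ ((M:ℤ)-1)) q) :=
      crucial_heavy_anc hΔ0 hqcr (by omega) (by omega)
    have hlb := heavy_count_lb hd hk hΔ0 ho hz (by omega : (0:ℤ) ≤ (M:ℤ)-1)
      (by omega : (M:ℤ)-1 ≤ (L:ℤ)-1) hHD
    have hqD : q ∈ cell d v (gside Δ ((M:ℤ)-1)) (idx d v (gside Δ ((M:ℤ)-1)) q) :=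
      mem_cell_self v (gside_pos hΔ0 _) q
    have hsub : Q.filter (fun r => r ∈ cell d v (gside Δ ((M:ℤ)-1))
        (idx d v (gside Δ ((M:ℤ)-1)) q)) ⊆ Qlevel d k L Δ Q v o zhat M := by
      intro r hr
      obtain ⟨hrQ, hrD⟩ := Finset.mem_filter.mp hr
      rw [Qlevel, Finset.mem_filter]
      refine ⟨hrQ, ?_⟩
      have hanc : ∀ j : ℤ, -1 ≤ j → j < (M:ℤ) →
          Heavy d k L Δ Q v o zhat j (idx d v (gside Δ j) r) := by
        intro j hj1 hj2
        have hidx : idx d v (gside Δ j) r = idx d v (gside Δ j) q :=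
          idx_agree_level hΔ0 (by omega) hrD hqD
        rw [hidx]
        exact crucial_heavy_anc hΔ0 hqcr hj1 hj2
      have hrC : r ∈ cell d v (gside Δ ((i:ℤ)-1)) (idx d v (gside Δ ((i:ℤ)-1)) p) := by
        have hidx : idx d v (gside Δ ((i:ℤ)-1)) r = idx d v (gside Δ ((i:ℤ)-1)) q :=
          idx_agree_level hΔ0 (by omega) hrD hqD
        have hqidx : idx d v (gside Δ ((i:ℤ)-1)) q = idx d v (gside Δ ((i:ℤ)-1)) p :=
          idx_eq_of_mem_cell hg hqC
        have hmem := mem_cell_self v hg r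
        rwa [hidx, hqidx] at hmem
      have hnotH : ¬ Heavy d k L Δ Q v o zhat (M:ℤ) (idx d v (gside Δ (M:ℤ)) r) := by
        intro hH
        rcases Nat.lt_or_ge M L with hMlt | hMge
        · obtain ⟨j', hj'1, hj'2, hj'Q⟩ := exists_crucial_level hL hΔ0 hrQ
            (t := M+1) (by omega) (by
              intro j hj1 hj2
              rcases lt_or_eq_of_le (by omega : j ≤ (M:ℤ)) with h | h
              · exact hanc j hj1 h
              · rw [h]; exact hH)
          have hj'SS : j' ∈ SS := by
            rw [hSS, Finset.mem_filter, Finset.mem_range]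
            exact ⟨by omega, by omega, ⟨r, hj'Q, hrC⟩⟩
          have hle : j' ≤ M := SS.le_max' j' hj'SS
          omega
        · rcases hH with ⟨h1, -⟩ | ⟨-, h2, -⟩ <;> omega
      exact ⟨by positivity, by exact_mod_cast hML', hnotH, by
        intro j hj1 hj2 m hsub'
        have hrm : r ∈ cell d v (gside Δ j) m :=
          hsub' (mem_cell_self v (gside_pos hΔ0 _) r)
        have hmeq : idx d v (gside Δ j) r = m := idx_eq_of_mem_cell (gside_pos hΔ0 j) hrm
        rw [← hmeq]
        exact hanc j hj1 hj2⟩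
    have hcard : (cellCount d Q v (gside Δ ((M:ℤ)-1)) (idx d v (gside Δ ((M:ℤ)-1)) q) : ℝ)
        ≤ ((Qlevel d k L Δ Q v o zhat M).card : ℝ) := by
      unfold cellCount
      exact_mod_cast Finset.card_le_card hsub
    have hT := Tthr_pos hd hk hΔ0 ho ((M:ℤ)-1)
    have hTs : Tthr d k Δ o (M:ℤ) = 4 * Tthr d k Δ o ((M:ℤ)-1) := Tthr_succ d k Δ o (M:ℤ)
    have hγ2 := gamma_lt hd hL hε0 hε1
    rw [hTs] at hub
    linarith [hlb, hcard, hub, mul_lt_mul_of_pos_right hγ2 hT]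
  refine ⟨hmain, ?_⟩
  unfold cellCount
  set F := (QI d k L Δ Q v o ε zhat qhat).filter
    (fun q => q ∈ cell d v (gside Δ ((i : ℤ) - 1))
      (idx d v (gside Δ ((i : ℤ) - 1)) p)) with hF
  have hm : 0 < F.card := Finset.card_pos.mpr hmain
  have hm' : (0:ℝ) < (F.card : ℝ) := by exact_mod_cast hm
  have key : ∀ q ∈ F, nearDist d p Z ^ 2 ≤
      2*(d:ℝ)*gside Δ ((i:ℤ)-1)^2 + 2 * nearDist d q Z ^ 2 := by
    intro q hqF
    have hqC : q ∈ cell d v (gside Δ ((i:ℤ)-1)) (idx d v (gside Δ ((i:ℤ)-1)) p) :=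
      (Finset.mem_filter.mp hqF).2
    obtain ⟨z, hzZ, hznd⟩ := nearDist_exists q hZ
    obtain ⟨zp, hzpZ, hzpnd⟩ := nearDist_exists p hZ
    have hnd0p : 0 ≤ nearDist d p Z := by rw [hzpnd]; exact dist_nonneg
    have hnd0q : 0 ≤ nearDist d q Z := by rw [hznd]; exact dist_nonneg
    have h1 : nearDist d p Z ≤ dist p q + nearDist d q Z := by
      calc nearDist d p Z ≤ dist p z := nearDist_le p hzZ
        _ ≤ dist p q + dist q z := dist_triangle p q z
        _ = dist p q + nearDist d q Z := by rw [hznd]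
    have h2 : dist p q ^ 2 ≤ (d:ℝ) * gside Δ ((i:ℤ)-1)^2 :=
      dist_sq_le_of_mem_cell hg hpC hqC
    nlinarith [dist_nonneg (x := p) (y := q), sq_nonneg (dist p q - nearDist d q Z)]
  have hsum : (F.card:ℝ) * nearDist d p Z ^ 2 ≤
      (F.card:ℝ) * (2*(d:ℝ)*gside Δ ((i:ℤ)-1)^2) + 2 * ∑ q ∈ F, nearDist d q Z ^ 2 := by
    have h1 : ∑ _q ∈ F, nearDist d p Z ^ 2 ≤
        ∑ q ∈ F, (2*(d:ℝ)*gside Δ ((i:ℤ)-1)^2 + 2 * nearDist d q Z ^ 2) :=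
      Finset.sum_le_sum key
    rw [Finset.sum_const, nsmul_eq_mul, Finset.sum_add_distrib, Finset.sum_const,
      nsmul_eq_mul, ← Finset.mul_sum] at h1
    linarith
  have heq : 2*(d:ℝ)*gside Δ ((i:ℤ)-1)^2 + (2/(F.card:ℝ)) * ∑ q ∈ F, nearDist d q Z ^ 2
      = ((F.card:ℝ) * (2*(d:ℝ)*gside Δ ((i:ℤ)-1)^2) + 2 * ∑ q ∈ F, nearDist d q Z ^ 2)
        / (F.card:ℝ) := by
    field_simp
  rw [heq, le_div_iff₀ hm']
  linarith [hsum]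

end
end

section
/- Let Z* ⊆ ℝ^d be a finite nonempty set. For each i ∈ {0,…,L}, let (h_i(p))_{p∈Q} be λ-wise independent {0,1}-valued random variables with P[h_i(p) = 1] = min(4·10⁴·λ/T_i(o), 1), and let (h′_i(p))_{p∈Q} be λ-wise independent {0,1}-valued random variables with P[h′_i(p) = 1] = min(4·10⁴·ε⁻²·γ⁻¹·λ/T_i(o), 1). Then with probability at least 1 − δ/10, simultaneously for every i ∈ {0,…,L}: Σ over cells C ∈ G_i that are not center cells with respect to Z* of Σ_{p∈C∩Q} h_i(p) is at most 4·10³·λ + 1.01·(4·10⁴·λ/T_i(o))·Σ_{non-center cell C ∈ G_i} |C∩Q|, and Σ over cells C ∈ G_i that are not center cells with respect to Z* of Σ_{p∈C∩Q} h′_i(p) is at most 4·10³·ε⁻¹·λ + 1.01·(4·10⁴·ε⁻²·γ⁻¹·λ/T_i(o))·Σ_{non-center cell C ∈ G_i} |C∩Q|. -/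
open scoped BigOperators Classical
open MeasureTheory

noncomputable section

namespace NSBaux

variable {Ω : Type} [MeasurableSpace Ω] (P : Measure Ω) [IsProbabilityMeasure P]

lemma integrable_of_bdd {g : Ω → ℝ} (hm : Measurable g) (c : ℝ) (hb : ∀ ω, |g ω| ≤ c) :
    Integrable g P := by
  refine (integrable_const c).mono' hm.aestronglyMeasurable ?_
  exact Filter.Eventually.of_forall (by simpa [Real.norm_eq_abs] using hb)

lemma integral_prod_indep {ι : Type*} (f : ι → Ω → ℝ)
    (hmeas : ∀ i, Measurable (f i)) (hbdd : ∀ i ω, |f i ω| ≤ 1)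
    (hindep : ProbabilityTheory.iIndepFun (m := fun _ => (inferInstance : MeasurableSpace ℝ)) f P)
    (u : Finset ι) :
    ∫ ω, ∏ i ∈ u, f i ω ∂P = ∏ i ∈ u, ∫ ω, f i ω ∂P := by
  classical
  induction u using Finset.induction_on with
  | empty => simp
  | @insert a u ha ih =>
    have hfn : (∏ j ∈ u, f j) = fun ω => ∏ i ∈ u, f i ω := by
      funext ω; exact Finset.prod_apply ω u f
    have hprodmeas : Measurable (fun ω => ∏ i ∈ u, f i ω) :=
      Finset.measurable_prod u (fun i _ => hmeas i)
    have hprodbd : ∀ ω, |∏ i ∈ u, f i ω| ≤ 1 := by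
      intro ω
      rw [Finset.abs_prod]
      refine Finset.prod_le_one (fun i _ => abs_nonneg _) (fun i _ => hbdd i ω)
    have h1 : Integrable (fun ω => ∏ i ∈ u, f i ω) P := integrable_of_bdd P hprodmeas 1 hprodbd
    have h2 : Integrable (f a) P := integrable_of_bdd P (hmeas a) 1 (fun ω => hbdd a ω)
    have hIF := (hindep.indepFun_finset_prod_of_notMem hmeas ha).integral_mul_eq_mul_integral
      (by rw [hfn]; exact h1.aestronglyMeasurable) h2.aestronglyMeasurable
    calc ∫ ω, ∏ i ∈ insert a u, f i ω ∂P
        = ∫ ω, ((∏ j ∈ u, f j) * f a) ω ∂P := by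
          refine integral_congr_ae (Filter.Eventually.of_forall (fun ω => ?_))
          show ∏ i ∈ insert a u, f i ω = ((∏ j ∈ u, f j) * f a) ω
          rw [Finset.prod_insert ha, Pi.mul_apply, hfn]
          ring
      _ = (∫ ω, (∏ j ∈ u, f j) ω ∂P) * ∫ ω, f a ω ∂P := hIF
      _ = ∏ i ∈ insert a u, ∫ ω, f i ω ∂P := by
          rw [Finset.prod_insert ha, ← ih]
          rw [show (∫ ω, (∏ j ∈ u, f j) ω ∂P) = ∫ ω, ∏ i ∈ u, f i ω ∂P by rw [hfn]]
          ring

lemma bern_integral_pow (Y : Ω → ℝ) (hm : Measurable Y)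
    (h01 : ∀ ω, Y ω = 0 ∨ Y ω = 1) {q : ℝ} (hq0 : 0 ≤ q)
    (hq : P {ω | Y ω = 1} = ENNReal.ofReal q) (m : ℕ) :
    ∫ ω, (Y ω - q) ^ m ∂P = (1 - q) ^ m * q + (-q) ^ m * (1 - q) := by
  have hYbd : ∀ ω, |Y ω| ≤ 1 := by
    intro ω; rcases h01 ω with h | h <;> rw [h] <;> norm_num
  have hYint : Integrable Y P := integrable_of_bdd P hm 1 hYbd
  have hms : MeasurableSet {ω | Y ω = 1} := hm (measurableSet_singleton 1)
  have hEY : ∫ ω, Y ω ∂P = q := by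
    have hid : Y = Set.indicator {ω | Y ω = 1} (1 : Ω → ℝ) := by
      funext ω
      rcases h01 ω with h | h
      · rw [h, Set.indicator_of_notMem (by simp [Set.mem_setOf_eq, h])]
      · rw [h, Set.indicator_of_mem (by simp [Set.mem_setOf_eq, h]), Pi.one_apply]
    rw [hid, integral_indicator_one hms, measureReal_def, hq, ENNReal.toReal_ofReal hq0]
  have hpt : ∀ ω, (Y ω - q) ^ m = ((1 - q) ^ m - (-q) ^ m) * Y ω + (-q) ^ m := by
    intro ω; rcases h01 ω with h | h <;> rw [h] <;> ring
  calc ∫ ω, (Y ω - q) ^ m ∂P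
      = ∫ ω, (((1 - q) ^ m - (-q) ^ m) * Y ω + (-q) ^ m) ∂P :=
        integral_congr_ae (Filter.Eventually.of_forall hpt)
    _ = ((1 - q) ^ m - (-q) ^ m) * q + (-q) ^ m := by
        rw [integral_add (hYint.const_mul _) (integrable_const _), integral_const_mul, hEY,
          integral_const]
        simp
    _ = (1 - q) ^ m * q + (-q) ^ m * (1 - q) := by ring

lemma bern_abs_le {q : ℝ} (hq0 : 0 ≤ q) (hq1 : q ≤ 1) {m : ℕ} (hm : 2 ≤ m) :
    |(1 - q) ^ m * q + (-q) ^ m * (1 - q)| ≤ q := by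
  have e1 : |(1 - q) ^ m * q| = (1 - q) ^ m * q := by
    rw [abs_mul, abs_pow, abs_of_nonneg (by linarith : (0:ℝ) ≤ 1 - q), abs_of_nonneg hq0]
  have e2 : |(-q) ^ m * (1 - q)| = q ^ m * (1 - q) := by
    rw [abs_mul, abs_pow, abs_neg, abs_of_nonneg hq0,
      abs_of_nonneg (by linarith : (0:ℝ) ≤ 1 - q)]
  have h1 := abs_add_le ((1 - q) ^ m * q) ((-q) ^ m * (1 - q))
  rw [e1, e2] at h1
  have h2 : (1 - q) ^ m ≤ (1 - q) ^ 1 :=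
    pow_le_pow_of_le_one (by linarith) (by linarith) (by omega)
  have h3 : q ^ m ≤ q ^ 2 := pow_le_pow_of_le_one hq0 hq1 hm
  have t1 : (1 - q) ^ m * q ≤ (1 - q) * q := by
    rw [pow_one] at h2; exact mul_le_mul_of_nonneg_right h2 hq0
  have t2 : q ^ m * (1 - q) ≤ q ^ 2 * (1 - q) :=
    mul_le_mul_of_nonneg_right h3 (by linarith)
  nlinarith [mul_nonneg (mul_nonneg hq0 hq0) hq0]

lemma pow_self_le_fact (r : ℕ) : (r:ℝ) ^ r ≤ 3 ^ r * (r.factorial : ℝ) := by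
  induction r with
  | zero => simp
  | succ n ih =>
    have hf : ((n+1).factorial : ℝ) = ((n:ℝ) + 1) * (n.factorial : ℝ) := by
      rw [Nat.factorial_succ]; push_cast; ring
    have hcast : ((n+1 : ℕ) : ℝ) = (n:ℝ) + 1 := by push_cast; ring
    rcases Nat.eq_zero_or_pos n with h0 | hpos
    · subst h0; norm_num
    · have hn : (0:ℝ) < n := by exact_mod_cast hpos
      have h1 : ((n:ℝ) + 1) ^ n ≤ 3 * (n:ℝ) ^ n := by
        have hsplit : ((n:ℝ) + 1) = n * (1 + 1 / n) := by field_simp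
        rw [hsplit, mul_pow]
        have h2 : (1 + 1 / (n:ℝ)) ^ n ≤ Real.exp 1 := by
          calc (1 + 1 / (n:ℝ)) ^ n ≤ (Real.exp (1 / n)) ^ n := by
                refine pow_le_pow_left₀ (by positivity) ?_ n
                have := Real.add_one_le_exp (1 / (n:ℝ))
                linarith
            _ = Real.exp (n * (1 / n)) := by rw [Real.exp_nat_mul]
            _ = Real.exp 1 := by rw [mul_one_div, div_self hn.ne']
        have h3 : Real.exp 1 ≤ 3 := by
          have := Real.exp_one_lt_d9; linarith
        calc (n:ℝ) ^ n * (1 + 1 / (n:ℝ)) ^ n ≤ (n:ℝ) ^ n * 3 :=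
              mul_le_mul_of_nonneg_left (h2.trans h3) (by positivity)
          _ = 3 * (n:ℝ) ^ n := by ring
      have hnn : (0:ℝ) ≤ (n:ℝ) + 1 := by positivity
      have key : ((n:ℝ) + 1) ^ n ≤ 3 * (3 ^ n * (n.factorial : ℝ)) :=
        h1.trans (mul_le_mul_of_nonneg_left ih (by norm_num))
      rw [hcast, hf, pow_succ]
      calc ((n:ℝ) + 1) ^ n * ((n:ℝ) + 1)
          ≤ (3 * (3 ^ n * (n.factorial : ℝ))) * ((n:ℝ) + 1) :=
            mul_le_mul_of_nonneg_right key hnn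
        _ = 3 ^ (n + 1) * (((n:ℝ) + 1) * (n.factorial : ℝ)) := by rw [pow_succ]; ring

lemma moment_bound {ι : Type*} (S : Finset ι) (Y : ι → Ω → ℝ)
    (hmeas : ∀ p, Measurable (Y p))
    (h01 : ∀ p ∈ S, ∀ ω, Y p ω = 0 ∨ Y p ω = 1)
    {q : ℝ} (hq0 : 0 ≤ q) (hq1 : q ≤ 1)
    (hq : ∀ p ∈ S, P {ω | Y p ω = 1} = ENNReal.ofReal q)
    (lam : ℕ) (hlam2 : 2 ≤ lam)
    (hind : ∀ t : Finset ι, t ⊆ S → t.card ≤ lam →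
      ProbabilityTheory.iIndepFun (m := fun _ : ↥t => (inferInstance : MeasurableSpace ℝ))
        (fun p : ↥t => Y ↑p) P) :
    ∫ ω, ((∑ p ∈ S, Y p ω) - q * S.card) ^ lam ∂P ≤
      ∑ r ∈ Finset.Icc 1 (lam / 2), q ^ r * (S.card.choose r : ℝ) * (r:ℝ) ^ lam := by
  classical
  have hZbd : ∀ p ∈ S, ∀ ω, |Y p ω - q| ≤ 1 := by
    intro p hp ω
    rcases h01 p hp ω with h | h <;> rw [h, abs_le] <;> constructor <;> linarith
  set mult : (Fin lam → ι) → ι → ℕ :=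
    fun f b => (Finset.univ.filter (fun j => f j = b)).card with hmult
  set rk : (Fin lam → ι) → ℕ := fun f => (Finset.image f Finset.univ).card with hrk
  set valid : (Fin lam → ι) → Prop := fun f => ∀ b ∈ Finset.image f Finset.univ, 2 ≤ mult f b
    with hvalid
  set I : ℕ → ℝ := fun m => (1 - q) ^ m * q + (-q) ^ m * (1 - q) with hI
  -- Step 1: rewrite the integrand
  have hstep : ∀ ω, ((∑ p ∈ S, Y p ω) - q * S.card) ^ lam
      = ∑ f ∈ Fintype.piFinset (fun _ : Fin lam => S), ∏ j : Fin lam, (Y (f j) ω - q) := by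
    intro ω
    have h1 : (∑ p ∈ S, Y p ω) - q * S.card = ∑ p ∈ S, (Y p ω - q) := by
      rw [Finset.sum_sub_distrib, Finset.sum_const, nsmul_eq_mul, mul_comm]
    rw [h1, ← Fin.prod_const lam (∑ p ∈ S, (Y p ω - q)), Finset.prod_univ_sum]
  have hint : ∀ f ∈ Fintype.piFinset (fun _ : Fin lam => S),
      Integrable (fun ω => ∏ j : Fin lam, (Y (f j) ω - q)) P := by
    intro f hf
    have hfS : ∀ j, f j ∈ S := fun j => (Fintype.mem_piFinset.mp hf) j
    refine integrable_of_bdd P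
      (Finset.measurable_prod _ (fun j _ => (hmeas (f j)).sub measurable_const)) 1 ?_
    intro ω
    rw [Finset.abs_prod]
    exact Finset.prod_le_one (fun j _ => abs_nonneg _) (fun j _ => hZbd (f j) (hfS j) ω)
  -- Step 2: value of each term
  have hterm : ∀ f ∈ Fintype.piFinset (fun _ : Fin lam => S),
      ∫ ω, ∏ j : Fin lam, (Y (f j) ω - q) ∂P
        = ∏ b ∈ Finset.image f Finset.univ, I (mult f b) := by
    intro f hf
    have hfS : ∀ j, f j ∈ S := fun j => (Fintype.mem_piFinset.mp hf) j
    have htS : Finset.image f Finset.univ ⊆ S := by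
      intro b hb; obtain ⟨j, _, rfl⟩ := Finset.mem_image.mp hb; exact hfS j
    have htcard : (Finset.image f Finset.univ).card ≤ lam :=
      le_trans Finset.card_image_le (by simp)
    have hindt : ProbabilityTheory.iIndepFun
        (m := fun _ : ↥(Finset.image f Finset.univ) => (inferInstance : MeasurableSpace ℝ))
        (fun b : ↥(Finset.image f Finset.univ) => fun ω => (Y ↑b ω - q) ^ (mult f ↑b)) P := by
      exact (hind _ htS htcard).comp (fun b => fun y : ℝ => (y - q) ^ (mult f ↑b))
        (fun b => (measurable_id.sub measurable_const).pow_const _)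
    have hpt : ∀ ω, ∏ j : Fin lam, (Y (f j) ω - q)
        = ∏ b ∈ Finset.image f Finset.univ, (Y b ω - q) ^ (mult f b) := by
      intro ω; exact Finset.prod_comp (fun b => Y b ω - q) f
    calc ∫ ω, ∏ j : Fin lam, (Y (f j) ω - q) ∂P
        = ∫ ω, ∏ b : ↥(Finset.image f Finset.univ), (Y ↑b ω - q) ^ (mult f ↑b) ∂P := by
          refine integral_congr_ae (Filter.Eventually.of_forall (fun ω => ?_))
          show ∏ j : Fin lam, (Y (f j) ω - q)
            = ∏ b : ↥(Finset.image f Finset.univ), (Y ↑b ω - q) ^ (mult f ↑b)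
          rw [hpt ω, ← Finset.prod_coe_sort]
      _ = ∏ b : ↥(Finset.image f Finset.univ), ∫ ω, (Y ↑b ω - q) ^ (mult f ↑b) ∂P := by
          refine integral_prod_indep P _
            (fun b => ((hmeas _).sub measurable_const).pow_const _) ?_ hindt Finset.univ
          intro b ω
          rw [abs_pow]
          exact pow_le_one₀ (abs_nonneg _) (hZbd ↑b (htS b.2) ω)
      _ = ∏ b ∈ Finset.image f Finset.univ, ∫ ω, (Y b ω - q) ^ (mult f b) ∂P := by
          conv_rhs => rw [← Finset.prod_coe_sort]
      _ = ∏ b ∈ Finset.image f Finset.univ, I (mult f b) := by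
          refine Finset.prod_congr rfl (fun b hb => ?_)
          exact bern_integral_pow P (Y b) (hmeas b) (h01 b (htS hb)) hq0 (hq b (htS hb)) _
  -- Step 3: bound each term
  have hmultpos : ∀ f : Fin lam → ι, ∀ b ∈ Finset.image f Finset.univ, 1 ≤ mult f b := by
    intro f b hb
    obtain ⟨j, _, rfl⟩ := Finset.mem_image.mp hb
    have : j ∈ Finset.univ.filter (fun j' => f j' = f j) := by
      simp
    exact Finset.card_pos.mpr ⟨j, this⟩
  have habs : ∀ f ∈ Fintype.piFinset (fun _ : Fin lam => S),
      ∏ b ∈ Finset.image f Finset.univ, I (mult f b)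
        ≤ if valid f then q ^ rk f else 0 := by
    intro f hf
    by_cases hv : valid f
    · rw [if_pos hv]
      have htS : Finset.image f Finset.univ ⊆ S := by
        intro b hb; obtain ⟨j, _, rfl⟩ := Finset.mem_image.mp hb
        exact (Fintype.mem_piFinset.mp hf) j
      calc ∏ b ∈ Finset.image f Finset.univ, I (mult f b)
          ≤ |∏ b ∈ Finset.image f Finset.univ, I (mult f b)| := le_abs_self _
        _ = ∏ b ∈ Finset.image f Finset.univ, |I (mult f b)| := Finset.abs_prod _ _
        _ ≤ ∏ b ∈ Finset.image f Finset.univ, q := by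
            refine Finset.prod_le_prod (fun b _ => abs_nonneg _) (fun b hb => ?_)
            exact bern_abs_le hq0 hq1 (hv b hb)
        _ = q ^ rk f := by rw [Finset.prod_const]
    · rw [if_neg hv]
      simp only [hvalid, not_forall] at hv
      obtain ⟨b, hb, hlt⟩ := hv
      have h1 : mult f b = 1 := by
        have := hmultpos f b hb
        omega
      have hIz : I (mult f b) = 0 := by
        rw [h1]; simp only [hI]; ring
      rw [Finset.prod_eq_zero hb hIz]
  -- Step 4: assemble
  have hfib : ∀ f, valid f → f ∈ Fintype.piFinset (fun _ : Fin lam => S) →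
      rk f ∈ Finset.Icc 1 (lam / 2) := by
    intro f hv _
    refine Finset.mem_Icc.mpr ⟨?_, ?_⟩
    · refine Finset.card_pos.mpr (Finset.Nonempty.image ⟨(⟨0, by omega⟩ : Fin lam),
        Finset.mem_univ _⟩ f)
    · have hsum : ∑ b ∈ Finset.image f Finset.univ, mult f b = lam := by
        have := Finset.card_eq_sum_card_fiberwise
          (fun ⦃j : Fin lam⦄ (_ : j ∈ (Finset.univ : Finset (Fin lam))) => Finset.mem_image_of_mem f (Finset.mem_univ j))
        simp only [Finset.card_univ, Fintype.card_fin] at this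
        exact this.symm
      have h2 : 2 * rk f ≤ lam := by
        calc 2 * rk f = ∑ _b ∈ Finset.image f Finset.univ, 2 := by
              rw [Finset.sum_const, smul_eq_mul]; ring
          _ ≤ ∑ b ∈ Finset.image f Finset.univ, mult f b :=
              Finset.sum_le_sum (fun b hb => hv b hb)
          _ = lam := hsum
      omega
  have hcount : ∀ r : ℕ,
      ((Fintype.piFinset (fun _ : Fin lam => S)).filter
        (fun f => valid f ∧ rk f = r)).card ≤ S.card.choose r * r ^ lam := by
    intro r
    have hsub : (Fintype.piFinset (fun _ : Fin lam => S)).filter (fun f => valid f ∧ rk f = r)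
        ⊆ (S.powersetCard r).biUnion (fun t => Fintype.piFinset (fun _ : Fin lam => t)) := by
      intro f hf
      obtain ⟨hfpi, _, hr⟩ := Finset.mem_filter.mp hf
      have htS : Finset.image f Finset.univ ⊆ S := by
        intro b hb; obtain ⟨j, _, rfl⟩ := Finset.mem_image.mp hb
        exact (Fintype.mem_piFinset.mp hfpi) j
      refine Finset.mem_biUnion.mpr ⟨Finset.image f Finset.univ,
        Finset.mem_powersetCard.mpr ⟨htS, hr⟩, ?_⟩
      exact Fintype.mem_piFinset.mpr (fun j => Finset.mem_image_of_mem f (Finset.mem_univ j))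
    calc ((Fintype.piFinset (fun _ : Fin lam => S)).filter (fun f => valid f ∧ rk f = r)).card
        ≤ ((S.powersetCard r).biUnion (fun t => Fintype.piFinset (fun _ : Fin lam => t))).card :=
          Finset.card_le_card hsub
      _ ≤ ∑ t ∈ S.powersetCard r, (Fintype.piFinset (fun _ : Fin lam => t)).card :=
          Finset.card_biUnion_le
      _ = ∑ t ∈ S.powersetCard r, r ^ lam := by
          refine Finset.sum_congr rfl (fun t ht => ?_)
          rw [Fintype.card_piFinset]
          rw [Finset.prod_const, Finset.card_univ, Fintype.card_fin,
            (Finset.mem_powersetCard.mp ht).2]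
      _ = S.card.choose r * r ^ lam := by
          rw [Finset.sum_const, smul_eq_mul, Finset.card_powersetCard]
  calc ∫ ω, ((∑ p ∈ S, Y p ω) - q * S.card) ^ lam ∂P
      = ∫ ω, ∑ f ∈ Fintype.piFinset (fun _ : Fin lam => S), ∏ j : Fin lam, (Y (f j) ω - q) ∂P :=
        integral_congr_ae (Filter.Eventually.of_forall hstep)
    _ = ∑ f ∈ Fintype.piFinset (fun _ : Fin lam => S), ∫ ω, ∏ j : Fin lam, (Y (f j) ω - q) ∂P :=
        integral_finset_sum _ hint
    _ ≤ ∑ f ∈ Fintype.piFinset (fun _ : Fin lam => S), if valid f then q ^ rk f else 0 := by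
        refine Finset.sum_le_sum (fun f hf => ?_)
        rw [hterm f hf]
        exact habs f hf
    _ = ∑ f ∈ (Fintype.piFinset (fun _ : Fin lam => S)).filter valid, q ^ rk f :=
        (Finset.sum_filter _ _).symm
    _ = ∑ r ∈ Finset.Icc 1 (lam / 2),
          ∑ f ∈ ((Fintype.piFinset (fun _ : Fin lam => S)).filter valid).filter
            (fun f => rk f = r), q ^ rk f := by
        refine (Finset.sum_fiberwise_of_maps_to ?_ _).symm
        intro f hf
        obtain ⟨hfpi, hv⟩ := Finset.mem_filter.mp hf
        exact hfib f hv hfpi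
    _ ≤ ∑ r ∈ Finset.Icc 1 (lam / 2), q ^ r * (S.card.choose r : ℝ) * (r:ℝ) ^ lam := by
        refine Finset.sum_le_sum (fun r hr => ?_)
        have heq : ∑ f ∈ ((Fintype.piFinset (fun _ : Fin lam => S)).filter valid).filter
            (fun f => rk f = r), q ^ rk f
            = (((Fintype.piFinset (fun _ : Fin lam => S)).filter valid).filter
              (fun f => rk f = r)).card * q ^ r := by
          rw [Finset.sum_congr rfl (fun f hf => by rw [(Finset.mem_filter.mp hf).2]),
            Finset.sum_const, nsmul_eq_mul]
        rw [heq]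
        have hcard : (((Fintype.piFinset (fun _ : Fin lam => S)).filter valid).filter
            (fun f => rk f = r)).card ≤ S.card.choose r * r ^ lam := by
          refine le_trans (le_of_eq ?_) (hcount r)
          rw [Finset.filter_filter]
        have hcR : ((((Fintype.piFinset (fun _ : Fin lam => S)).filter valid).filter
            (fun f => rk f = r)).card : ℝ) ≤ (S.card.choose r : ℝ) * (r:ℝ) ^ lam := by
          exact_mod_cast hcard
        calc ((((Fintype.piFinset (fun _ : Fin lam => S)).filter valid).filter
            (fun f => rk f = r)).card : ℝ) * q ^ r
            ≤ ((S.card.choose r : ℝ) * (r:ℝ) ^ lam) * q ^ r :=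
              mul_le_mul_of_nonneg_right hcR (pow_nonneg hq0 r)
          _ = q ^ r * (S.card.choose r : ℝ) * (r:ℝ) ^ lam := by ring

lemma term_numeric (N r lam : ℕ) {q : ℝ} (hq0 : 0 ≤ q) (hq1 : q ≤ 1)
    (hr1 : 1 ≤ r) (hr2 : 2 * r ≤ lam) {s : ℕ} (hs : lam = 2 * s) :
    q ^ r * (N.choose r : ℝ) * (r:ℝ) ^ lam ≤
      (1/10 : ℝ) ^ lam * (4000 * (lam:ℝ) + 0.01 * (q * N)) ^ lam := by
  have hrs : r ≤ s := by omega
  set μ : ℝ := q * N with hμ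
  have hμ0 : 0 ≤ μ := mul_nonneg hq0 (Nat.cast_nonneg N)
  set τ : ℝ := 4000 * (lam:ℝ) + 0.01 * μ with hτdef
  have hlamR : (2:ℝ) ≤ (lam:ℝ) := by exact_mod_cast (by omega : 2 ≤ lam)
  have hτ1 : 4000 * (lam:ℝ) ≤ τ := by rw [hτdef]; linarith
  have hτ0 : 0 < τ := by linarith
  have hch : (N.choose r : ℝ) * (r.factorial : ℝ) ≤ (N:ℝ) ^ r := by
    have h := Nat.descFactorial_le_pow N r
    rw [Nat.descFactorial_eq_factorial_mul_choose] at h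
    have h' : ((r.factorial * N.choose r : ℕ) : ℝ) ≤ ((N ^ r : ℕ) : ℝ) := by exact_mod_cast h
    push_cast at h'
    linarith
  have hrr := pow_self_le_fact r
  have e1 : (r:ℝ) ^ lam = (r:ℝ) ^ r * (r:ℝ) ^ (lam - r) := by
    rw [← pow_add]; congr 1; omega
  have hA : q ^ r * (N.choose r : ℝ) * (r:ℝ) ^ lam ≤ (3 * μ) ^ r * (r:ℝ) ^ (lam - r) := by
    calc q ^ r * (N.choose r : ℝ) * (r:ℝ) ^ lam
        = q ^ r * (N.choose r : ℝ) * ((r:ℝ) ^ r * (r:ℝ) ^ (lam - r)) := by rw [e1]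
      _ ≤ q ^ r * (N.choose r : ℝ) * ((3 ^ r * (r.factorial : ℝ)) * (r:ℝ) ^ (lam - r)) := by
          refine mul_le_mul_of_nonneg_left
            (mul_le_mul_of_nonneg_right hrr (by positivity)) (by positivity)
      _ = (3 ^ r * q ^ r) * ((N.choose r : ℝ) * (r.factorial : ℝ)) * (r:ℝ) ^ (lam - r) := by
          ring
      _ ≤ (3 ^ r * q ^ r) * (N:ℝ) ^ r * (r:ℝ) ^ (lam - r) := by
          refine mul_le_mul_of_nonneg_right
            (mul_le_mul_of_nonneg_left hch (by positivity)) (by positivity)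
      _ = (3 * μ) ^ r * (r:ℝ) ^ (lam - r) := by
          rw [hμ, mul_pow, mul_pow]; ring
  have hrhalf : (r:ℝ) ≤ (lam:ℝ)/2 := by
    have : ((2*r : ℕ) : ℝ) ≤ (lam:ℝ) := by exact_mod_cast hr2
    push_cast at this
    linarith
  have hB : (3*μ) ^ r * (r:ℝ) ^ (lam - r) ≤ (3*μ) ^ r * ((lam:ℝ)/2) ^ (lam - r) :=
    mul_le_mul_of_nonneg_left
      (pow_le_pow_left₀ (Nat.cast_nonneg r) hrhalf _) (by positivity)
  set a : ℝ := 3*μ with ha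
  set b : ℝ := (lam:ℝ)/2 with hb
  have ha0 : 0 ≤ a := by positivity
  have hb1 : 1 ≤ b := by rw [hb]; linarith
  have hb0 : 0 ≤ b := by linarith
  have hmain : a ^ r * b ^ (lam - r) ≤ (1/10 : ℝ) ^ lam * τ ^ lam := by
    rcases le_or_gt a b with hab | hab
    · have h5 : a ^ r * b ^ (lam - r) ≤ b ^ r * b ^ (lam - r) :=
        mul_le_mul_of_nonneg_right (pow_le_pow_left₀ ha0 hab r) (by positivity)
      have h6 : b ^ r * b ^ (lam - r) = b ^ lam := by rw [← pow_add]; congr 1; omega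
      have h7 : b ≤ (1/10) * τ := by
        rw [hb, hτdef]; linarith
      have h8 : b ^ lam ≤ ((1/10) * τ) ^ lam := pow_le_pow_left₀ hb0 h7 lam
      calc a ^ r * b ^ (lam - r) ≤ b ^ lam := by rw [← h6]; exact h5
        _ ≤ ((1/10) * τ) ^ lam := h8
        _ = (1/10 : ℝ) ^ lam * τ ^ lam := mul_pow _ _ _
    · have h5 : a ^ r * b ^ (lam - r) ≤ a ^ s * b ^ s := by
        have e2 : b ^ (lam - r) = b ^ s * b ^ (s - r) := by rw [← pow_add]; congr 1; omega
        have e3 : a ^ s = a ^ r * a ^ (s - r) := by rw [← pow_add]; congr 1; omega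
        have h51 : b ^ (s - r) ≤ a ^ (s - r) := pow_le_pow_left₀ hb0 hab.le _
        calc a ^ r * b ^ (lam - r) = (a ^ r * b ^ (s - r)) * b ^ s := by rw [e2]; ring
          _ ≤ (a ^ r * a ^ (s - r)) * b ^ s := by
              refine mul_le_mul_of_nonneg_right
                (mul_le_mul_of_nonneg_left h51 (by positivity)) (by positivity)
          _ = a ^ s * b ^ s := by rw [e3]
      have h6 : a * b ≤ 0.01 * τ ^ 2 := by
        have hlmnn : (0:ℝ) ≤ (lam:ℝ) * μ :=
          mul_nonneg (Nat.cast_nonneg lam) hμ0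
        rw [ha, hb, hτdef]
        nlinarith [sq_nonneg (4000*(lam:ℝ) - 0.01*μ), hlmnn, hμ0, hlamR]
      have h7 : a ^ s * b ^ s = (a*b) ^ s := (mul_pow _ _ _).symm
      have h8 : (a*b) ^ s ≤ (0.01 * τ ^ 2) ^ s :=
        pow_le_pow_left₀ (mul_nonneg ha0 hb0) h6 s
      have h9 : (0.01 * τ ^ 2) ^ s = (1/10 : ℝ) ^ lam * τ ^ lam := by
        rw [hs, pow_mul, pow_mul, ← mul_pow]
        norm_num
      calc a ^ r * b ^ (lam - r) ≤ a ^ s * b ^ s := h5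
        _ = (a*b) ^ s := h7
        _ ≤ (0.01 * τ ^ 2) ^ s := h8
        _ = (1/10 : ℝ) ^ lam * τ ^ lam := h9
  calc q ^ r * (N.choose r : ℝ) * (r:ℝ) ^ lam
      ≤ a ^ r * (r:ℝ) ^ (lam - r) := hA
    _ ≤ a ^ r * b ^ (lam - r) := hB
    _ ≤ (1/10 : ℝ) ^ lam * τ ^ lam := hmain

lemma tail_bound {ι : Type*} (S : Finset ι) (Y : ι → Ω → ℝ)
    (hmeas : ∀ p, Measurable (Y p))
    (h01 : ∀ p ∈ S, ∀ ω, Y p ω = 0 ∨ Y p ω = 1)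
    {q : ℝ} (hq0 : 0 ≤ q) (hq1 : q ≤ 1)
    (hq : ∀ p ∈ S, P {ω | Y p ω = 1} = ENNReal.ofReal q)
    (lam : ℕ) (hlam2 : 2 ≤ lam) (heven : Even lam)
    (hind : ∀ t : Finset ι, t ⊆ S → t.card ≤ lam →
      ProbabilityTheory.iIndepFun (m := fun _ : ↥t => (inferInstance : MeasurableSpace ℝ))
        (fun p : ↥t => Y ↑p) P) :
    P {ω | q * (S.card : ℝ) + (4000 * (lam:ℝ) + 0.01 * (q * (S.card : ℝ)))
        ≤ ∑ p ∈ S, Y p ω}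
      ≤ ENNReal.ofReal ((lam:ℝ) * (1/10 : ℝ) ^ lam) := by
  obtain ⟨s, hss⟩ := heven
  have hs2 : lam = 2 * s := by omega
  set μR : ℝ := q * (S.card : ℝ) with hμR
  set τ : ℝ := 4000 * (lam:ℝ) + 0.01 * μR with hτdef
  have hμ0 : 0 ≤ μR := mul_nonneg hq0 (Nat.cast_nonneg _)
  have hlamR : (2:ℝ) ≤ (lam:ℝ) := by exact_mod_cast hlam2
  have hτ0 : 0 < τ := by rw [hτdef]; linarith
  have hX : Measurable (fun ω => ∑ p ∈ S, Y p ω) :=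
    Finset.measurable_sum _ (fun p _ => hmeas p)
  have hXbd : ∀ ω, |(∑ p ∈ S, Y p ω) - μR| ≤ (S.card : ℝ) + μR := by
    intro ω
    have h1 : |∑ p ∈ S, Y p ω| ≤ (S.card:ℝ) := by
      refine le_trans (Finset.abs_sum_le_sum_abs _ _) ?_
      calc ∑ p ∈ S, |Y p ω| ≤ ∑ _p ∈ S, (1:ℝ) :=
            Finset.sum_le_sum (fun p hp => by
              rcases h01 p hp ω with h|h <;> rw [h] <;> norm_num)
        _ = S.card := by rw [Finset.sum_const, nsmul_eq_mul, mul_one]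
    have h2 : |(∑ p ∈ S, Y p ω) - μR| ≤ |∑ p ∈ S, Y p ω| + |μR| := by
      rw [sub_eq_add_neg]
      exact (abs_add_le _ _).trans (le_of_eq (by rw [abs_neg]))
    rw [abs_of_nonneg hμ0] at h2
    linarith
  have hg : Measurable (fun ω => ((∑ p ∈ S, Y p ω) - μR) ^ lam) :=
    (hX.sub measurable_const).pow_const _
  have hgint : Integrable (fun ω => ((∑ p ∈ S, Y p ω) - μR) ^ lam) P := by
    refine integrable_of_bdd P hg (((S.card:ℝ) + μR) ^ lam) ?_
    intro ω; rw [abs_pow]; exact pow_le_pow_left₀ (abs_nonneg _) (hXbd ω) lam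
  have hgnn : ∀ ω, 0 ≤ ((∑ p ∈ S, Y p ω) - μR) ^ lam :=
    fun ω => Even.pow_nonneg ⟨s, hss⟩ _
  have hmom := moment_bound P S Y hmeas h01 hq0 hq1 hq lam hlam2 hind
  rw [← hμR] at hmom
  have hM : ∑ r ∈ Finset.Icc 1 (lam / 2), q ^ r * (S.card.choose r : ℝ) * (r:ℝ) ^ lam
      ≤ (lam:ℝ) * ((1/10 : ℝ) ^ lam * τ ^ lam) := by
    calc ∑ r ∈ Finset.Icc 1 (lam / 2), q ^ r * (S.card.choose r : ℝ) * (r:ℝ) ^ lam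
        ≤ ∑ _r ∈ Finset.Icc 1 (lam / 2), (1/10 : ℝ) ^ lam * τ ^ lam := by
          refine Finset.sum_le_sum (fun r hr => ?_)
          obtain ⟨hr1, hrhalf⟩ := Finset.mem_Icc.mp hr
          have hr2 : 2 * r ≤ lam := by omega
          exact term_numeric S.card r lam hq0 hq1 hr1 hr2 hs2
      _ = ((Finset.Icc 1 (lam / 2)).card : ℝ) * ((1/10 : ℝ) ^ lam * τ ^ lam) := by
          rw [Finset.sum_const, nsmul_eq_mul]
      _ ≤ (lam:ℝ) * ((1/10 : ℝ) ^ lam * τ ^ lam) := by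
          have hc : (Finset.Icc 1 (lam / 2)).card ≤ lam := by
            rw [Nat.card_Icc]; omega
          refine mul_le_mul_of_nonneg_right (by exact_mod_cast hc) (by positivity)
  have hmarkov := mul_meas_ge_le_integral_of_nonneg (μ := P)
      (Filter.Eventually.of_forall hgnn) hgint (τ ^ lam)
  have hsub : {ω | μR + τ ≤ ∑ p ∈ S, Y p ω}
      ⊆ {ω | τ ^ lam ≤ ((∑ p ∈ S, Y p ω) - μR) ^ lam} := by
    intro ω hω
    simp only [Set.mem_setOf_eq] at *
    exact pow_le_pow_left₀ hτ0.le (by linarith) lam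
  have hτl : 0 < τ ^ lam := pow_pos hτ0 lam
  have htR : (P {ω | τ ^ lam ≤ ((∑ p ∈ S, Y p ω) - μR) ^ lam}).toReal
      ≤ (lam:ℝ) * (1/10 : ℝ) ^ lam := by
    have h2 : (P {ω | τ ^ lam ≤ ((∑ p ∈ S, Y p ω) - μR) ^ lam}).toReal * τ ^ lam
        ≤ ((lam:ℝ) * (1/10 : ℝ) ^ lam) * τ ^ lam := by rw [measureReal_def] at hmarkov; linarith [hmarkov, hmom, hM]
    exact le_of_mul_le_mul_right h2 hτl
  calc P {ω | μR + τ ≤ ∑ p ∈ S, Y p ω}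
      ≤ P {ω | τ ^ lam ≤ ((∑ p ∈ S, Y p ω) - μR) ^ lam} := measure_mono hsub
    _ = ENNReal.ofReal ((P {ω | τ ^ lam ≤ ((∑ p ∈ S, Y p ω) - μR) ^ lam}).toReal) :=
        (ENNReal.ofReal_toReal (measure_ne_top _ _)).symm
    _ ≤ ENNReal.ofReal ((lam:ℝ) * (1/10 : ℝ) ^ lam) := ENNReal.ofReal_le_ofReal htR

lemma gside_pos {Δ : ℕ} (hΔ : 0 < Δ) (i : ℤ) : 0 < gside Δ i := by
  unfold gside
  have h2 : (0:ℝ) < (2:ℝ) ^ i := zpow_pos (by norm_num) i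
  have hΔ' : (0:ℝ) < (Δ:ℝ) := by exact_mod_cast hΔ
  positivity

lemma mem_cell_iff {d : ℕ} (v : Pt d) {g : ℝ} (hg : 0 < g) (p : Pt d) (n : Fin d → ℤ) :
    p ∈ cell d v g n ↔ idx d v g p = n := by
  unfold cell idx
  rw [Set.mem_setOf_eq, funext_iff]
  refine forall_congr' (fun α => ?_)
  rw [Int.floor_eq_iff, le_div_iff₀ hg, div_lt_iff₀ hg]
  constructor
  · rintro ⟨h1, h2⟩
    constructor
    · nlinarith
    · nlinarith
  · rintro ⟨h1, h2⟩
    constructor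
    · nlinarith
    · nlinarith

lemma tsum_noncenter (d Δ : ℕ) (hΔ : 0 < Δ) (v : Pt d) (Zstar : Finset (Pt d))
    (i : ℤ) (Q : Finset (Pt d)) (φ : Pt d → ℝ) :
    (∑' n : {n : Fin d → ℤ // ¬ IsCenterCell d Δ v Zstar i n},
        ∑ p ∈ Q.filter (fun p => p ∈ cell d v (gside Δ i) ↑n), φ p)
      = ∑ p ∈ Q.filter
          (fun p => ¬ IsCenterCell d Δ v Zstar i (idx d v (gside Δ i) p)), φ p := by
  classical
  have hg : 0 < gside Δ i := gside_pos hΔ i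
  set g : ℝ := gside Δ i with hgdef
  set T : Finset (Fin d → ℤ) :=
    (Q.image (idx d v g)).filter (fun n => ¬ IsCenterCell d Δ v Zstar i n) with hT
  have hvanish : ∀ (b : {n : Fin d → ℤ // ¬ IsCenterCell d Δ v Zstar i n}),
      b ∉ T.subtype (fun n => ¬ IsCenterCell d Δ v Zstar i n) →
      ∑ p ∈ Q.filter (fun p => p ∈ cell d v g ↑b), φ p = 0 := by
    intro b hb
    have hbT : ↑b ∉ T := fun h => hb (Finset.mem_subtype.mpr h)
    have hempty : Q.filter (fun p => p ∈ cell d v g ↑b) = ∅ := by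
      refine Finset.filter_eq_empty_iff.mpr (fun {p} hp hmem => ?_)
      have hidx : idx d v g p = ↑b := (mem_cell_iff v hg p ↑b).mp hmem
      refine hbT (Finset.mem_filter.mpr ⟨?_, b.2⟩)
      rw [← hidx]
      exact Finset.mem_image_of_mem _ hp
    rw [hempty, Finset.sum_empty]
  rw [tsum_eq_sum hvanish, Finset.sum_subtype_eq_sum_filter (fun n => ∑ p ∈ Q.filter (fun p => p ∈ cell d v g n), φ p),
    Finset.filter_true_of_mem (fun n hn => (Finset.mem_filter.mp hn).2)]
  have hre : ∀ n ∈ T, ∑ p ∈ Q.filter (fun p => p ∈ cell d v g n), φ p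
      = ∑ p ∈ (Q.filter (fun p => ¬ IsCenterCell d Δ v Zstar i (idx d v g p))).filter
          (fun p => idx d v g p = n), φ p := by
    intro n hn
    refine Finset.sum_congr ?_ (fun _ _ => rfl)
    ext p
    simp only [Finset.mem_filter]
    constructor
    · rintro ⟨hpQ, hcell⟩
      have hidx := (mem_cell_iff v hg p n).mp hcell
      refine ⟨⟨hpQ, ?_⟩, hidx⟩
      rw [hidx]
      exact (Finset.mem_filter.mp hn).2
    · rintro ⟨⟨hpQ, _⟩, hidx⟩
      exact ⟨hpQ, (mem_cell_iff v hg p n).mpr hidx⟩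
  rw [Finset.sum_congr rfl hre]
  refine Finset.sum_fiberwise_of_maps_to (fun p hp => ?_) φ
  obtain ⟨hpQ, hpc⟩ := Finset.mem_filter.mp hp
  exact Finset.mem_filter.mpr ⟨Finset.mem_image_of_mem _ hpQ, hpc⟩

lemma tsum_noncenter_count (d Δ : ℕ) (hΔ : 0 < Δ) (v : Pt d) (Zstar : Finset (Pt d))
    (i : ℤ) (Q : Finset (Pt d)) :
    (∑' n : {n : Fin d → ℤ // ¬ IsCenterCell d Δ v Zstar i n},
        (cellCount d Q v (gside Δ i) ↑n : ℝ))
      = ((Q.filter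
          (fun p => ¬ IsCenterCell d Δ v Zstar i (idx d v (gside Δ i) p))).card : ℝ) := by
  classical
  have h := tsum_noncenter d Δ hΔ v Zstar i Q (fun _ => (1:ℝ))
  have h1 : (∑' n : {n : Fin d → ℤ // ¬ IsCenterCell d Δ v Zstar i n},
      (cellCount d Q v (gside Δ i) ↑n : ℝ))
      = ∑' n : {n : Fin d → ℤ // ¬ IsCenterCell d Δ v Zstar i n},
        ∑ p ∈ Q.filter (fun p => p ∈ cell d v (gside Δ i) ↑n), (1:ℝ) := by
    refine tsum_congr (fun n => ?_)
    unfold cellCount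
    rw [Finset.sum_const, nsmul_eq_mul, mul_one]
  rw [h1, h, Finset.sum_const, nsmul_eq_mul, mul_one]

lemma final_numeric (L d : ℕ) (hL : 1 ≤ L) (hd : 1 ≤ d) {δ : ℝ} (hδ0 : 0 < δ)
    (hδ1 : δ < 1/2) (lam : ℕ)
    (hlam : 10 * ((d : ℝ) * (L : ℝ) + Real.logb 2 (1 / δ) + 1) ≤ (lam : ℝ)) :
    ((L:ℝ) + 1) * (2 * ((lam:ℝ) * (1/10 : ℝ) ^ lam)) ≤ δ / 10 := by
  set β := Real.logb 2 (1/δ) with hβ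
  have hδinv : (2:ℝ) < 1/δ := by rw [lt_div_iff₀ hδ0]; linarith
  have hβ1 : 1 < β := by
    rw [hβ]
    calc (1:ℝ) = Real.logb 2 2 := (Real.logb_self_eq_one (b := 2) (by norm_num)).symm
      _ < Real.logb 2 (1/δ) := by
          exact Real.logb_lt_logb (b := 2) (by norm_num) (by norm_num) hδinv
  have hdL : (1:ℝ) ≤ (d:ℝ) * (L:ℝ) := by
    have h1 : (1:ℝ) ≤ (d:ℝ) := by exact_mod_cast hd
    have h2 : (1:ℝ) ≤ (L:ℝ) := by exact_mod_cast hL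
    nlinarith
  have hlam' : 10 * β + 20 ≤ (lam:ℝ) := by linarith
  have hLlamR : (L:ℝ) ≤ (lam:ℝ) := by
    have h2 : (1:ℝ) ≤ (d:ℝ) := by exact_mod_cast hd
    have h3 : (0:ℝ) ≤ (L:ℝ) := Nat.cast_nonneg L
    nlinarith
  have hLlam : L ≤ lam := by exact_mod_cast hLlamR
  have hkey : 20 / δ ≤ (2:ℝ) ^ lam := by
    have h1 : 1/δ = (2:ℝ) ^ β := by
      rw [hβ, Real.rpow_logb (by norm_num) (by norm_num) (by positivity)]
    have h2 : (2:ℝ) ^ ((10:ℝ) * β + 20) ≤ (2:ℝ) ^ ((lam:ℕ):ℝ) :=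
      Real.rpow_le_rpow_of_exponent_le (by norm_num) (by push_cast; linarith)
    have h3 : (2:ℝ) ^ ((10:ℝ) * β + 20) = ((2:ℝ) ^ β) ^ (10:ℕ) * 2 ^ (20:ℕ) := by
      rw [Real.rpow_add (by norm_num)]
      congr 1
      · rw [← Real.rpow_natCast ((2:ℝ) ^ β) 10, ← Real.rpow_mul (by norm_num)]
        norm_num
        rw [mul_comm]
      · rw [show ((20:ℝ)) = ((20:ℕ):ℝ) by norm_num, Real.rpow_natCast]
    have h4 : (2:ℝ) ^ ((lam:ℕ):ℝ) = 2 ^ lam := Real.rpow_natCast 2 lam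
    have h5 : 20/δ ≤ (1/δ) ^ (10:ℕ) * 2 ^ (20:ℕ) := by
      have hinv1 : 1 ≤ 1/δ := by rw [le_div_iff₀ hδ0]; linarith
      have h6 : 1/δ ≤ (1/δ) ^ (10:ℕ) := le_self_pow₀ hinv1 (by norm_num)
      have h7 : (20:ℝ) ≤ 2 ^ (20:ℕ) := by norm_num
      calc 20/δ = 20 * (1/δ) := by ring
        _ ≤ (2:ℝ) ^ (20:ℕ) * (1/δ) ^ (10:ℕ) := by
            refine mul_le_mul h7 h6 (by positivity) (by positivity)
        _ = (1/δ) ^ (10:ℕ) * 2 ^ (20:ℕ) := by ring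
    calc 20/δ ≤ (1/δ) ^ (10:ℕ) * 2 ^ (20:ℕ) := h5
      _ = ((2:ℝ) ^ β) ^ (10:ℕ) * 2 ^ (20:ℕ) := by rw [h1]
      _ = (2:ℝ) ^ ((10:ℝ) * β + 20) := h3.symm
      _ ≤ (2:ℝ) ^ ((lam:ℕ):ℝ) := h2
      _ = 2 ^ lam := h4
  have hL2 : ((L:ℝ) + 1) ≤ (2:ℝ) ^ lam := by
    have h1 : L + 1 ≤ 2 ^ L := Nat.lt_two_pow_self (n := L)
    have h2 : (2:ℕ) ^ L ≤ 2 ^ lam := Nat.pow_le_pow_right (by norm_num) hLlam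
    exact_mod_cast le_trans h1 h2
  have hlam2 : (lam:ℝ) ≤ (2:ℝ) ^ lam := by exact_mod_cast (Nat.lt_two_pow_self (n := lam)).le
  have hp : (0:ℝ) ≤ (1/10 : ℝ) ^ lam := by positivity
  have hstep1 : ((L:ℝ) + 1) * (2 * ((lam:ℝ) * (1/10 : ℝ) ^ lam))
      ≤ 2 * ((2:ℝ) ^ lam * (2:ℝ) ^ lam * (1/10 : ℝ) ^ lam) := by
    have hmul : ((L:ℝ) + 1) * (lam:ℝ) ≤ (2:ℝ) ^ lam * (2:ℝ) ^ lam :=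
      mul_le_mul hL2 hlam2 (Nat.cast_nonneg lam) (by positivity)
    nlinarith [hmul, hp]
  have h456 : (2:ℝ) ^ lam * (2:ℝ) ^ lam * (1/10 : ℝ) ^ lam = ((2:ℝ)/5) ^ lam := by
    rw [← mul_pow, ← mul_pow]
    norm_num
  have h25 : ((2:ℝ)/5) ^ lam ≤ ((1:ℝ)/2) ^ lam :=
    pow_le_pow_left₀ (by norm_num) (by norm_num) lam
  have hhalf : ((1:ℝ)/2) ^ lam = ((2:ℝ) ^ lam)⁻¹ := by
    rw [one_div, inv_pow]
  have hfin : 2 * ((2:ℝ) ^ lam)⁻¹ ≤ δ / 10 := by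
    have hpos : (0:ℝ) < 20/δ := by positivity
    have hinv : ((2:ℝ) ^ lam)⁻¹ ≤ (20/δ)⁻¹ := inv_anti₀ hpos hkey
    have heq : ((20:ℝ)/δ)⁻¹ = δ/20 := by rw [inv_div]
    rw [heq] at hinv
    linarith
  calc ((L:ℝ) + 1) * (2 * ((lam:ℝ) * (1/10 : ℝ) ^ lam))
      ≤ 2 * ((2:ℝ) ^ lam * (2:ℝ) ^ lam * (1/10 : ℝ) ^ lam) := hstep1
    _ = 2 * ((2:ℝ)/5) ^ lam := by rw [h456]
    _ ≤ 2 * ((1:ℝ)/2) ^ lam := by linarith [h25]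
    _ = 2 * ((2:ℝ) ^ lam)⁻¹ := by rw [hhalf]
    _ ≤ δ / 10 := hfin


def Sf (d Δ : ℕ) (v : Pt d) (Zstar Q : Finset (Pt d)) (i : ℤ) : Finset (Pt d) :=
  Q.filter (fun p => ¬ IsCenterCell d Δ v Zstar i (idx d v (gside Δ i) p))

lemma tsum_noncenter_Sf (d Δ : ℕ) (hΔ : 0 < Δ) (v : Pt d) (Zstar : Finset (Pt d))
    (i : ℤ) (Q : Finset (Pt d)) (φ : Pt d → ℝ) :
    (∑' n : {n : Fin d → ℤ // ¬ IsCenterCell d Δ v Zstar i n},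
        ∑ p ∈ Q.filter (fun p => p ∈ cell d v (gside Δ i) ↑n), φ p)
      = ∑ p ∈ Sf d Δ v Zstar Q i, φ p :=
  tsum_noncenter d Δ hΔ v Zstar i Q φ

lemma tsum_noncenter_count_Sf (d Δ : ℕ) (hΔ : 0 < Δ) (v : Pt d) (Zstar : Finset (Pt d))
    (i : ℤ) (Q : Finset (Pt d)) :
    (∑' n : {n : Fin d → ℤ // ¬ IsCenterCell d Δ v Zstar i n},
        (cellCount d Q v (gside Δ i) ↑n : ℝ))
      = ((Sf d Δ v Zstar Q i).card : ℝ) :=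
  tsum_noncenter_count d Δ hΔ v Zstar i Q

def badE {Ω : Type} {γ : Type*} (S : Finset γ) (Y : γ → Ω → ℝ) (q : ℝ) (lam : ℕ) : Set Ω :=
  {ω | q * (S.card : ℝ) + (4000 * (lam:ℝ) + 0.01 * (q * (S.card : ℝ))) ≤ ∑ p ∈ S, Y p ω}

lemma tail_bound' {ι : Type*} (S : Finset ι) (Y : ι → Ω → ℝ)
    (hmeas : ∀ p, Measurable (Y p))
    (h01 : ∀ p ∈ S, ∀ ω, Y p ω = 0 ∨ Y p ω = 1)
    {q : ℝ} (hq0 : 0 ≤ q) (hq1 : q ≤ 1)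
    (hq : ∀ p ∈ S, P {ω | Y p ω = 1} = ENNReal.ofReal q)
    (lam : ℕ) (hlam2 : 2 ≤ lam) (heven : Even lam)
    (hind : ∀ t : Finset ι, t ⊆ S → t.card ≤ lam →
      ProbabilityTheory.iIndepFun (m := fun _ : ↥t => (inferInstance : MeasurableSpace ℝ))
        (fun p : ↥t => Y ↑p) P) :
    P (badE S Y q lam) ≤ ENNReal.ofReal ((lam:ℝ) * (1/10 : ℝ) ^ lam) :=
  tail_bound P S Y hmeas h01 hq0 hq1 hq lam hlam2 heven hind

end NSBaux
open ProbabilityTheory in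
/-- with probability at least `1 − δ/10`, simultaneously for every level
`i ∈ {0,…,L}`, the numbers of sampled points (under `h_i` and under `h′_i`) lying in
non-center cells of `G_i` are bounded by `4·10³·λ + 1.01·(4·10⁴·λ/T_i(o))·Σ|C∩Q|`
and `4·10³·ε⁻¹·λ + 1.01·(4·10⁴·ε⁻²·γ⁻¹·λ/T_i(o))·Σ|C∩Q|` respectively, the sums
ranging over the non-center cells `C ∈ G_i`. -/
theorem noncenter_sample_bounds
    (d k L Δ : ℕ) (hd : 1 ≤ d) (hk : 1 ≤ k) (hL : 1 ≤ L) (hΔ : Δ = 2 ^ L)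
    (v : Pt d) (Q : Finset (Pt d))
    (hQ : ∀ p ∈ Q, ∀ α : Fin d, ∃ m : ℤ, 1 ≤ m ∧ m ≤ (Δ : ℤ) ∧ p α = (m : ℝ))
    (o : ℝ) (ho : 0 < o)
    (ε : ℝ) (hε0 : 0 < ε) (hε1 : ε < 1 / 2)
    (Zstar : Finset (Pt d))
    (δ : ℝ) (hδ0 : 0 < δ) (hδ1 : δ < 1 / 2)
    (lam : ℕ) (hlamEven : Even lam) (hlamPos : 0 < lam)
    (hlam : 10 * ((d : ℝ) * (L : ℝ) + Real.logb 2 (1 / δ) + 1) ≤ (lam : ℝ))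
    {Ω : Type} [MeasurableSpace Ω] (P : Measure Ω) [IsProbabilityMeasure P]
    (h h' : ℕ → Pt d → Ω → ℝ)
    (hmeas : ∀ i : ℕ, ∀ p : Pt d, Measurable (h i p))
    (hmeas' : ∀ i : ℕ, ∀ p : Pt d, Measurable (h' i p))
    (h01 : ∀ i : ℕ, i ≤ L → ∀ p ∈ Q, ∀ ω : Ω, h i p ω = 0 ∨ h i p ω = 1)
    (h01' : ∀ i : ℕ, i ≤ L → ∀ p ∈ Q, ∀ ω : Ω, h' i p ω = 0 ∨ h' i p ω = 1)
    (hprob : ∀ i : ℕ, i ≤ L → ∀ p ∈ Q,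
      P {ω | h i p ω = 1} =
        ENNReal.ofReal (min (4 * 10 ^ 4 * (lam : ℝ) / Tthr d k Δ o i) 1))
    (hprob' : ∀ i : ℕ, i ≤ L → ∀ p ∈ Q,
      P {ω | h' i p ω = 1} =
        ENNReal.ofReal (min
          (4 * 10 ^ 4 * ε⁻¹ ^ 2 * (gammaPar d L ε)⁻¹ * (lam : ℝ) / Tthr d k Δ o i) 1))
    (hindep : ∀ i : ℕ, i ≤ L → ∀ s : Finset (Pt d), s ⊆ Q → s.card ≤ lam →
      iIndepFun (m := fun _ : ↥s => (inferInstance : MeasurableSpace ℝ))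
        (fun p : ↥s => h i ↑p) P)
    (hindep' : ∀ i : ℕ, i ≤ L → ∀ s : Finset (Pt d), s ⊆ Q → s.card ≤ lam →
      iIndepFun (m := fun _ : ↥s => (inferInstance : MeasurableSpace ℝ))
        (fun p : ↥s => h' i ↑p) P) :
    ENNReal.ofReal (1 - δ / 10) ≤
      P {ω | ∀ i : ℕ, i ≤ L →
        ((∑' n : {n : Fin d → ℤ // ¬ IsCenterCell d Δ v Zstar i n},
            ∑ p ∈ Q.filter (fun p => p ∈ cell d v (gside Δ i) ↑n), h i p ω) ≤
          4 * 10 ^ 3 * (lam : ℝ) +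
            1.01 * (4 * 10 ^ 4 * (lam : ℝ) / Tthr d k Δ o i) *
              (∑' n : {n : Fin d → ℤ // ¬ IsCenterCell d Δ v Zstar i n},
                (cellCount d Q v (gside Δ i) ↑n : ℝ))) ∧
        ((∑' n : {n : Fin d → ℤ // ¬ IsCenterCell d Δ v Zstar i n},
            ∑ p ∈ Q.filter (fun p => p ∈ cell d v (gside Δ i) ↑n), h' i p ω) ≤
          4 * 10 ^ 3 * ε⁻¹ * (lam : ℝ) +
            1.01 * (4 * 10 ^ 4 * ε⁻¹ ^ 2 * (gammaPar d L ε)⁻¹ * (lam : ℝ) /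
                Tthr d k Δ o i) *
              (∑' n : {n : Fin d → ℤ // ¬ IsCenterCell d Δ v Zstar i n},
                (cellCount d Q v (gside Δ i) ↑n : ℝ)))} := by
  classical
  have hΔpos : 0 < Δ := by rw [hΔ]; positivity
  have hβ1 : 1 < Real.logb 2 (1/δ) := by
    have hδinv : (2:ℝ) < 1/δ := by rw [lt_div_iff₀ hδ0]; linarith
    calc (1:ℝ) = Real.logb 2 2 := (Real.logb_self_eq_one (b := 2) (by norm_num)).symm
      _ < Real.logb 2 (1/δ) := Real.logb_lt_logb (b := 2) (by norm_num) (by norm_num) hδinv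
  have hdL1 : (1:ℝ) ≤ (d:ℝ) * (L:ℝ) := by
    have h1 : (1:ℝ) ≤ (d:ℝ) := by exact_mod_cast hd
    have h2 : (1:ℝ) ≤ (L:ℝ) := by exact_mod_cast hL
    nlinarith
  have hlam30 : (30:ℝ) ≤ (lam:ℝ) := by
    have : Real.logb 2 (1/δ) = Real.logb 2 (1/δ) := rfl
    linarith [hlam]
  have hlam2 : 2 ≤ lam := by
    have : (2:ℝ) ≤ (lam:ℝ) := by linarith
    exact_mod_cast this
  have hdpos : (0:ℝ) < (d:ℝ) := by exact_mod_cast hd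
  have hkpos : (0:ℝ) < (k:ℝ) := by exact_mod_cast hk
  have hLpos : (0:ℝ) < (L:ℝ) := by exact_mod_cast hL
  have hTpos : ∀ i : ℕ, 0 < Tthr d k Δ o (i:ℤ) := by
    intro i
    have hg := NSBaux.gside_pos hΔpos (i:ℤ)
    unfold Tthr
    have h1 : 0 < (d:ℝ) / gside Δ (i:ℤ) := div_pos hdpos hg
    exact div_pos (mul_pos (pow_pos h1 2) ho) (by positivity)
  have hγpos : 0 < gammaPar d L ε := by
    unfold gammaPar
    exact div_pos hε0 (by positivity)
  have hεinv1 : (1:ℝ) ≤ ε⁻¹ := by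
    rw [one_le_inv_iff₀]
    exact ⟨hε0, by linarith⟩
  -- the per-level quantities
  set S : ℕ → Finset (Pt d) := fun i => NSBaux.Sf d Δ v Zstar Q (i:ℤ) with hSdef
  set q1 : ℕ → ℝ := fun i => min (4 * 10 ^ 4 * (lam : ℝ) / Tthr d k Δ o (i:ℤ)) 1 with hq1def
  set q2 : ℕ → ℝ := fun i => min
      (4 * 10 ^ 4 * ε⁻¹ ^ 2 * (gammaPar d L ε)⁻¹ * (lam : ℝ) / Tthr d k Δ o (i:ℤ)) 1 with hq2def
  have hSQ : ∀ i : ℕ, S i ⊆ Q := fun i => Finset.filter_subset _ _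
  have hc1 : ∀ i : ℕ, 0 ≤ 4 * 10 ^ 4 * (lam : ℝ) / Tthr d k Δ o (i:ℤ) :=
    fun i => div_nonneg (by positivity) (hTpos i).le
  have hc2 : ∀ i : ℕ,
      0 ≤ 4 * 10 ^ 4 * ε⁻¹ ^ 2 * (gammaPar d L ε)⁻¹ * (lam : ℝ) / Tthr d k Δ o (i:ℤ) := by
    intro i
    have h1 : (0:ℝ) ≤ (gammaPar d L ε)⁻¹ := (inv_nonneg).mpr hγpos.le
    have h2 : (0:ℝ) ≤ ε⁻¹ ^ 2 := by positivity
    refine div_nonneg ?_ (hTpos i).le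
    have : (0:ℝ) ≤ (lam:ℝ) := Nat.cast_nonneg lam
    positivity
  -- tail bounds for the bad events
  have hbad1 : ∀ i : ℕ, i ≤ L →
      P (NSBaux.badE (S i) (h i) (q1 i) lam)
        ≤ ENNReal.ofReal ((lam:ℝ) * (1/10 : ℝ) ^ lam) := by
    intro i hi
    refine NSBaux.tail_bound' P (S i) (h i) (fun p => hmeas i p) ?_
      (le_min (hc1 i) zero_le_one) (min_le_right _ _) ?_ lam hlam2 hlamEven ?_
    · intro p hp ω; exact h01 i hi p (hSQ i hp) ω
    · intro p hp; exact hprob i hi p (hSQ i hp)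
    · intro t ht hcard; exact hindep i hi t (ht.trans (hSQ i)) hcard
  have hbad2 : ∀ i : ℕ, i ≤ L →
      P (NSBaux.badE (S i) (h' i) (q2 i) lam)
        ≤ ENNReal.ofReal ((lam:ℝ) * (1/10 : ℝ) ^ lam) := by
    intro i hi
    refine NSBaux.tail_bound' P (S i) (h' i) (fun p => hmeas' i p) ?_
      (le_min (hc2 i) zero_le_one) (min_le_right _ _) ?_ lam hlam2 hlamEven ?_
    · intro p hp ω; exact h01' i hi p (hSQ i hp) ω
    · intro p hp; exact hprob' i hi p (hSQ i hp)
    · intro t ht hcard; exact hindep' i hi t (ht.trans (hSQ i)) hcard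
  -- the good set
  set G : Set Ω := {ω | ∀ i : ℕ, i ≤ L →
      ω ∉ NSBaux.badE (S i) (h i) (q1 i) lam ∧
      ω ∉ NSBaux.badE (S i) (h' i) (q2 i) lam} with hGdef
  -- complement bound
  have hGc : Gᶜ ⊆ ⋃ i ∈ Finset.range (L+1),
      (NSBaux.badE (S i) (h i) (q1 i) lam ∪ NSBaux.badE (S i) (h' i) (q2 i) lam) := by
    intro ω hω
    rw [Set.mem_compl_iff, hGdef, Set.mem_setOf_eq] at hω
    push_neg at hω
    obtain ⟨i, hi, hnot⟩ := hω
    refine Set.mem_iUnion.mpr ⟨i, Set.mem_iUnion.mpr ⟨Finset.mem_range.mpr (by omega), ?_⟩⟩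
    by_cases hb1 : ω ∈ NSBaux.badE (S i) (h i) (q1 i) lam
    · exact Set.mem_union_left _ hb1
    · exact Set.mem_union_right _ (hnot hb1)
  have hPGc : P Gᶜ ≤ ENNReal.ofReal (δ/10) := by
    refine le_trans (measure_mono hGc) (le_trans (measure_biUnion_finset_le _ _) ?_)
    have hterm : ∀ i ∈ Finset.range (L+1),
        P (NSBaux.badE (S i) (h i) (q1 i) lam ∪ NSBaux.badE (S i) (h' i) (q2 i) lam)
          ≤ ENNReal.ofReal (2 * ((lam:ℝ) * (1/10 : ℝ) ^ lam)) := by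
      intro i hi
      have hiL : i ≤ L := by
        have := Finset.mem_range.mp hi; omega
      refine le_trans (measure_union_le _ _) ?_
      calc P (NSBaux.badE (S i) (h i) (q1 i) lam) + P (NSBaux.badE (S i) (h' i) (q2 i) lam)
          ≤ ENNReal.ofReal ((lam:ℝ) * (1/10 : ℝ) ^ lam)
            + ENNReal.ofReal ((lam:ℝ) * (1/10 : ℝ) ^ lam) :=
            add_le_add (hbad1 i hiL) (hbad2 i hiL)
        _ = ENNReal.ofReal (2 * ((lam:ℝ) * (1/10 : ℝ) ^ lam)) := by
            rw [← ENNReal.ofReal_add (by positivity) (by positivity)]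
            ring_nf
    calc ∑ i ∈ Finset.range (L+1),
          P (NSBaux.badE (S i) (h i) (q1 i) lam ∪ NSBaux.badE (S i) (h' i) (q2 i) lam)
        ≤ ∑ _i ∈ Finset.range (L+1), ENNReal.ofReal (2 * ((lam:ℝ) * (1/10 : ℝ) ^ lam)) :=
          Finset.sum_le_sum hterm
      _ = ((L+1 : ℕ) : ENNReal) * ENNReal.ofReal (2 * ((lam:ℝ) * (1/10 : ℝ) ^ lam)) := by
          rw [Finset.sum_const, Finset.card_range, nsmul_eq_mul]
      _ = ENNReal.ofReal (((L:ℝ)+1) * (2 * ((lam:ℝ) * (1/10 : ℝ) ^ lam))) := by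
          rw [← ENNReal.ofReal_natCast (L+1), ← ENNReal.ofReal_mul (by positivity)]
          congr 2
          push_cast
          ring
      _ ≤ ENNReal.ofReal (δ/10) := by
          refine ENNReal.ofReal_le_ofReal ?_
          exact NSBaux.final_numeric L d hL hd hδ0 hδ1 lam hlam
  -- the good set is contained in the target event
  have hGsub : G ⊆ {ω | ∀ i : ℕ, i ≤ L →
        ((∑' n : {n : Fin d → ℤ // ¬ IsCenterCell d Δ v Zstar i n},
            ∑ p ∈ Q.filter (fun p => p ∈ cell d v (gside Δ i) ↑n), h i p ω) ≤
          4 * 10 ^ 3 * (lam : ℝ) +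
            1.01 * (4 * 10 ^ 4 * (lam : ℝ) / Tthr d k Δ o i) *
              (∑' n : {n : Fin d → ℤ // ¬ IsCenterCell d Δ v Zstar i n},
                (cellCount d Q v (gside Δ i) ↑n : ℝ))) ∧
        ((∑' n : {n : Fin d → ℤ // ¬ IsCenterCell d Δ v Zstar i n},
            ∑ p ∈ Q.filter (fun p => p ∈ cell d v (gside Δ i) ↑n), h' i p ω) ≤
          4 * 10 ^ 3 * ε⁻¹ * (lam : ℝ) +
            1.01 * (4 * 10 ^ 4 * ε⁻¹ ^ 2 * (gammaPar d L ε)⁻¹ * (lam : ℝ) /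
                Tthr d k Δ o i) *
              (∑' n : {n : Fin d → ℤ // ¬ IsCenterCell d Δ v Zstar i n},
                (cellCount d Q v (gside Δ i) ↑n : ℝ)))} := by
    intro ω hω
    rw [hGdef, Set.mem_setOf_eq] at hω
    rw [Set.mem_setOf_eq]
    intro i hiL
    obtain ⟨hnb1, hnb2⟩ := hω i hiL
    rw [NSBaux.badE, Set.mem_setOf_eq, not_le] at hnb1 hnb2
    have ht1 := NSBaux.tsum_noncenter_Sf d Δ hΔpos v Zstar (i:ℤ) Q (fun p => h i p ω)
    have ht2 := NSBaux.tsum_noncenter_Sf d Δ hΔpos v Zstar (i:ℤ) Q (fun p => h' i p ω)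
    have htc := NSBaux.tsum_noncenter_count_Sf d Δ hΔpos v Zstar (i:ℤ) Q
    rw [ht1, ht2, htc]
    have hN0 : (0:ℝ) ≤ ((S i).card : ℝ) := Nat.cast_nonneg _
    constructor
    · have hmin : q1 i ≤ 4 * 10 ^ 4 * (lam : ℝ) / Tthr d k Δ o (i:ℤ) := min_le_left _ _
      have hmul : q1 i * ((S i).card : ℝ)
          ≤ (4 * 10 ^ 4 * (lam : ℝ) / Tthr d k Δ o (i:ℤ)) * ((S i).card : ℝ) :=
        mul_le_mul_of_nonneg_right hmin hN0
      linarith [hnb1, hmul]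
    · have hmin : q2 i ≤ 4 * 10 ^ 4 * ε⁻¹ ^ 2 * (gammaPar d L ε)⁻¹ * (lam : ℝ) /
          Tthr d k Δ o (i:ℤ) := min_le_left _ _
      have hmul : q2 i * ((S i).card : ℝ)
          ≤ (4 * 10 ^ 4 * ε⁻¹ ^ 2 * (gammaPar d L ε)⁻¹ * (lam : ℝ) /
            Tthr d k Δ o (i:ℤ)) * ((S i).card : ℝ) :=
        mul_le_mul_of_nonneg_right hmin hN0
      have hlamnn : (0:ℝ) ≤ (lam:ℝ) := Nat.cast_nonneg lam
      have hextra : 4 * 10 ^ 3 * (lam:ℝ) ≤ 4 * 10 ^ 3 * ε⁻¹ * (lam:ℝ) := by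
        nlinarith [hεinv1, hlamnn]
      linarith [hnb2, hmul, hextra]
  -- conclude
  refine le_trans ?_ (measure_mono hGsub)
  have h1 : ENNReal.ofReal (1 - δ/10) + ENNReal.ofReal (δ/10) = 1 := by
    rw [← ENNReal.ofReal_add (by linarith) (by linarith)]
    norm_num
  have h2 : ENNReal.ofReal (1 - δ/10) + ENNReal.ofReal (δ/10)
      ≤ P G + ENNReal.ofReal (δ/10) := by
    rw [h1]
    calc (1:ENNReal) = P Set.univ := measure_univ.symm
      _ = P (G ∪ Gᶜ) := by rw [Set.union_compl_self]
      _ ≤ P G + P Gᶜ := measure_union_le _ _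
      _ ≤ P G + ENNReal.ofReal (δ/10) := add_le_add le_rfl hPGc
  exact (ENNReal.add_le_add_iff_right ENNReal.ofReal_ne_top).mp h2

end
end
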